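/- Call-by-value simulation of the λμ-calculus by the λ̄μμ̃-calculus: if a λμ-term (or command) t reduces to w by one call-by-value λμ-reduction step, then there exists a λ̄μμ̃-term (or command) u such that t† reduces to u by zero or more call-by-value λ̄μμ̃-reduction steps and w† reduces to u by zero or more linear call-by-value λ̄μμ̃-reduction steps. -/

import Mathlib

set_option autoImplicit true

namespace CHSim

/-- Lift a de Bruijn renaming under a binder. -/
def upr (ξ : ℕ → ℕ) : ℕ → ℕ
  | 0 => 0
  | k+1 => ξ k + 1

/-! ## The λμ-calculus (de Bruijn representation).

λ-variables and μ-variables each have their own name space of de Bruijn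
indices.  `abs t` is `λx.t` (binding λ-index 0) and `mabs c` is `μα.c`
(binding μ-index 0); `cmd a t` is the command `[a]t`. -/

mutual
  inductive Tm : Type
    | var : ℕ → Tm
    | abs : Tm → Tm
    | app : Tm → Tm → Tm
    | mabs : Cm → Tm
  inductive Cm : Type
    | cmd : ℕ → Tm → Cm
end

/-- λμ-contexts `e ::= ⟨α⟩ | ⟨β⟩(t ·) | e · t`. -/
inductive Ct : Type
  | cvar : ℕ → Ct
  | push : ℕ → Tm → Ct
  | cons : Ct → Tm → Ct

/-- Filling a λμ-context with a term: `⟨α⟩⟨t⟩ = [α]t`,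
`(⟨β⟩(u ·))⟨t⟩ = [β](u t)`, `(h · u)⟨t⟩ = h⟨t u⟩`. -/
def fill : Ct → Tm → Cm
  | .cvar a, t => .cmd a t
  | .push b u, t => .cmd b (.app u t)
  | .cons h u, t => fill h (.app t u)

mutual
  /-- Renaming of λ-variables in λμ-terms. -/
  def renLT (ξ : ℕ → ℕ) : Tm → Tm
    | .var x => .var (ξ x)
    | .abs t => .abs (renLT (upr ξ) t)
    | .app t u => .app (renLT ξ t) (renLT ξ u)
    | .mabs c => .mabs (renLC ξ c)
  /-- Renaming of λ-variables in λμ-commands. -/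
  def renLC (ξ : ℕ → ℕ) : Cm → Cm
    | .cmd a t => .cmd a (renLT ξ t)
end

mutual
  /-- Renaming of μ-variables in λμ-terms. -/
  def renMT (ξ : ℕ → ℕ) : Tm → Tm
    | .var x => .var x
    | .abs t => .abs (renMT ξ t)
    | .app t u => .app (renMT ξ t) (renMT ξ u)
    | .mabs c => .mabs (renMC (upr ξ) c)
  /-- Renaming of μ-variables in λμ-commands. -/
  def renMC (ξ : ℕ → ℕ) : Cm → Cm
    | .cmd a t => .cmd (ξ a) (renMT ξ t)
end

/-- Renaming of λ-variables in λμ-contexts. -/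
def renLE (ξ : ℕ → ℕ) : Ct → Ct
  | .cvar a => .cvar a
  | .push b t => .push b (renLT ξ t)
  | .cons e t => .cons (renLE ξ e) (renLT ξ t)

/-- Renaming of μ-variables in λμ-contexts. -/
def renME (ξ : ℕ → ℕ) : Ct → Ct
  | .cvar a => .cvar (ξ a)
  | .push b t => .push (ξ b) (renMT ξ t)
  | .cons e t => .cons (renME ξ e) (renMT ξ t)

/-- Lifting a λ-substitution under a λ-binder. -/
def upsL (σ : ℕ → Tm) : ℕ → Tm
  | 0 => .var 0
  | k+1 => renLT Nat.succ (σ k)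

mutual
  /-- (Capture-avoiding) substitution for λ-variables in λμ-terms. -/
  def lsubT (σ : ℕ → Tm) : Tm → Tm
    | .var x => σ x
    | .abs t => .abs (lsubT (upsL σ) t)
    | .app t u => .app (lsubT σ t) (lsubT σ u)
    | .mabs c => .mabs (lsubC (fun k => renMT Nat.succ (σ k)) c)
  /-- Substitution for λ-variables in λμ-commands. -/
  def lsubC (σ : ℕ → Tm) : Cm → Cm
    | .cmd a t => .cmd a (lsubT σ t)
end

/-- Substitution for λ-variables in λμ-contexts. -/
def lsubE (σ : ℕ → Tm) : Ct → Ct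
  | .cvar a => .cvar a
  | .push b t => .push b (lsubT σ t)
  | .cons e t => .cons (lsubE σ e) (lsubT σ t)

/-- The substitution replacing the λ-variable `x` by `u`. -/
def sub1L (x : ℕ) (u : Tm) : ℕ → Tm := fun k => if k = x then u else .var k

/-- The β-substitution replacing the bound λ-variable 0 by `u`. -/
def sub0L (u : Tm) : ℕ → Tm
  | 0 => u
  | k+1 => .var k

/-- Lifting a structural (μ-)substitution under a μ-binder. -/
def upsM (σ : ℕ → Ct) : ℕ → Ct
  | 0 => .cvar 0
  | k+1 => renME Nat.succ (σ k)

mutual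
  /-- Structural substitution of λμ-contexts for μ-variables in λμ-terms:
  every subcommand `[α]u` is replaced by `(σ α)⟨u[σ]⟩`. -/
  def msubT (σ : ℕ → Ct) : Tm → Tm
    | .var x => .var x
    | .abs t => .abs (msubT (fun k => renLE Nat.succ (σ k)) t)
    | .app t u => .app (msubT σ t) (msubT σ u)
    | .mabs c => .mabs (msubC (upsM σ) c)
  /-- Structural substitution in λμ-commands. -/
  def msubC (σ : ℕ → Ct) : Cm → Cm
    | .cmd a t => fill (σ a) (msubT σ t)
end

/-- Structural substitution in λμ-contexts (the head variable of
`⟨β⟩(t ·)` is, by the freshness convention of the translations,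
never the substituted variable, so it is left untouched). -/
def msubE (σ : ℕ → Ct) : Ct → Ct
  | .cvar a => σ a
  | .push b t => .push b (msubT σ t)
  | .cons e t => .cons (msubE σ e) (msubT σ t)

/-- The structural substitution replacing the μ-variable `a` by the context `e`. -/
def sub1M (a : ℕ) (e : Ct) : ℕ → Ct := fun k => if k = a then e else .cvar k

/-- The structural substitution replacing the bound μ-variable 0 by the
context `e` (removing the binder). -/
def sub0M (e : Ct) : ℕ → Ct
  | 0 => e
  | k+1 => .cvar k

mutual
  /-- Number of free occurrences of the λ-variable `x` in a λμ-term. -/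
  def cntLT (x : ℕ) : Tm → ℕ
    | .var y => if y = x then 1 else 0
    | .abs t => cntLT (x+1) t
    | .app t u => cntLT x t + cntLT x u
    | .mabs c => cntLC x c
  /-- Number of free occurrences of the λ-variable `x` in a λμ-command. -/
  def cntLC (x : ℕ) : Cm → ℕ
    | .cmd _ t => cntLT x t
end

/-- λμ-values `v ::= x | λx.t`. -/
inductive IsVal : Tm → Prop
  | var (x : ℕ) : IsVal (.var x)
  | abs (t : Tm) : IsVal (.abs t)

/-! ### Reduction in λμ: congruence closure of root rules -/

mutual
  /-- Congruence (compatible) closure of root relations, term level. -/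
  inductive KT (R1 : Tm → Tm → Prop) (R2 : Cm → Cm → Prop) : Tm → Tm → Prop
    | root {t t'} : R1 t t' → KT R1 R2 t t'
    | absC {t t'} : KT R1 R2 t t' → KT R1 R2 (.abs t) (.abs t')
    | appL {t t'} (u) : KT R1 R2 t t' → KT R1 R2 (.app t u) (.app t' u)
    | appR (t) {u u'} : KT R1 R2 u u' → KT R1 R2 (.app t u) (.app t u')
    | mabsC {c c'} : KC R1 R2 c c' → KT R1 R2 (.mabs c) (.mabs c')
  /-- Congruence (compatible) closure of root relations, command level. -/
  inductive KC (R1 : Tm → Tm → Prop) (R2 : Cm → Cm → Prop) : Cm → Cm → Prop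
    | root {c c'} : R2 c c' → KC R1 R2 c c'
    | cmdC (a) {t t'} : KT R1 R2 t t' → KC R1 R2 (.cmd a t) (.cmd a t')
end

/-- Term-level root rules of the undirected λμ-calculus: β, μ, μ', θ. -/
inductive RootT : Tm → Tm → Prop
  | beta (u t : Tm) : RootT (.app (.abs u) t) (lsubT (sub0L t) u)
  | mu (c : Cm) (t : Tm) : RootT (.app (.mabs c) t)
      (.mabs (msubC (sub1M 0 (.cons (.cvar 0) (renMT Nat.succ t))) c))
  | mu' (t : Tm) (c : Cm) : RootT (.app t (.mabs c))
      (.mabs (msubC (sub1M 0 (.push 0 (renMT Nat.succ t))) c))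
  | theta (t : Tm) : RootT (.mabs (.cmd 0 (renMT Nat.succ t))) t

/-- Command-level root rule of the λμ-calculus: ρ. -/
inductive RootC : Cm → Cm → Prop
  | rho (b : ℕ) (c : Cm) : RootC (.cmd b (.mabs c)) (msubC (sub0M (.cvar b)) c)

/-- Term-level *linear* root rules of the λμ-calculus: θ, and β when the
argument is a variable or the bound variable occurs exactly once. -/
inductive RootTlin : Tm → Tm → Prop
  | beta (u t : Tm) : ((∃ y, t = Tm.var y) ∨ cntLT 0 u = 1) →
      RootTlin (.app (.abs u) t) (lsubT (sub0L t) u)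
  | theta (t : Tm) : RootTlin (.mabs (.cmd 0 (renMT Nat.succ t))) t

/-- Term-level root rules of call-by-name λμ: β, μ, θ (no μ'). -/
inductive RootTn : Tm → Tm → Prop
  | beta (u t : Tm) : RootTn (.app (.abs u) t) (lsubT (sub0L t) u)
  | mu (c : Cm) (t : Tm) : RootTn (.app (.mabs c) t)
      (.mabs (msubC (sub1M 0 (.cons (.cvar 0) (renMT Nat.succ t))) c))
  | theta (t : Tm) : RootTn (.mabs (.cmd 0 (renMT Nat.succ t))) t

/-- Term-level root rules of call-by-value λμ: βv, μv, μ', θ. -/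
inductive RootTv : Tm → Tm → Prop
  | betav (u t : Tm) : IsVal t → RootTv (.app (.abs u) t) (lsubT (sub0L t) u)
  | muv (c : Cm) (t : Tm) : IsVal t → RootTv (.app (.mabs c) t)
      (.mabs (msubC (sub1M 0 (.cons (.cvar 0) (renMT Nat.succ t))) c))
  | mu' (t : Tm) (c : Cm) : RootTv (.app t (.mabs c))
      (.mabs (msubC (sub1M 0 (.push 0 (renMT Nat.succ t))) c))
  | theta (t : Tm) : RootTv (.mabs (.cmd 0 (renMT Nat.succ t))) t

/-- Term-level *linear call-by-value* root rules of λμ. -/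
inductive RootTvlin : Tm → Tm → Prop
  | betav (u t : Tm) : IsVal t → ((∃ y, t = Tm.var y) ∨ cntLT 0 u = 1) →
      RootTvlin (.app (.abs u) t) (lsubT (sub0L t) u)
  | theta (t : Tm) : RootTvlin (.mabs (.cmd 0 (renMT Nat.succ t))) t

/-- One-step λμ-reduction (β, μ, μ', ρ, θ), terms. -/
abbrev StepT := KT RootT RootC
/-- One-step λμ-reduction (β, μ, μ', ρ, θ), commands. -/
abbrev StepC := KC RootT RootC
/-- One-step linear λμ-reduction, terms. -/
abbrev LStepT := KT RootTlin RootC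
/-- One-step linear λμ-reduction, commands. -/
abbrev LStepC := KC RootTlin RootC
/-- One-step call-by-name λμ-reduction, terms. -/
abbrev StepNT := KT RootTn RootC
/-- One-step call-by-name λμ-reduction, commands. -/
abbrev StepNC := KC RootTn RootC
/-- One-step call-by-value λμ-reduction, terms. -/
abbrev StepVT := KT RootTv RootC
/-- One-step call-by-value λμ-reduction, commands. -/
abbrev StepVC := KC RootTv RootC
/-- One-step linear call-by-value λμ-reduction, terms. -/
abbrev LStepVT := KT RootTvlin RootC
/-- One-step linear call-by-value λμ-reduction, commands. -/
abbrev LStepVC := KC RootTvlin RootC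

/-- Reflexive-transitive closure. -/
abbrev Star {α : Type} (r : α → α → Prop) : α → α → Prop := Relation.ReflTransGen r

/-! ## The λ̄μμ̃-calculus (de Bruijn representation). -/

mutual
  inductive BTm : Type
    | var : ℕ → BTm
    | abs : BTm → BTm
    | mabs : BCm → BTm
  inductive BCm : Type
    | cut : BTm → BCt → BCm
  inductive BCt : Type
    | cvar : ℕ → BCt
    | cons : BTm → BCt → BCt
    | tmu : BCm → BCt
end

mutual
  /-- Renaming of λ-variables in λ̄μμ̃-terms. -/
  def brenLT (ξ : ℕ → ℕ) : BTm → BTm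
    | .var x => .var (ξ x)
    | .abs t => .abs (brenLT (upr ξ) t)
    | .mabs c => .mabs (brenLC ξ c)
  def brenLC (ξ : ℕ → ℕ) : BCm → BCm
    | .cut t e => .cut (brenLT ξ t) (brenLE ξ e)
  def brenLE (ξ : ℕ → ℕ) : BCt → BCt
    | .cvar a => .cvar a
    | .cons t e => .cons (brenLT ξ t) (brenLE ξ e)
    | .tmu c => .tmu (brenLC (upr ξ) c)
end

mutual
  /-- Renaming of μ-variables in λ̄μμ̃-terms. -/
  def brenMT (ξ : ℕ → ℕ) : BTm → BTm
    | .var x => .var x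
    | .abs t => .abs (brenMT ξ t)
    | .mabs c => .mabs (brenMC (upr ξ) c)
  def brenMC (ξ : ℕ → ℕ) : BCm → BCm
    | .cut t e => .cut (brenMT ξ t) (brenME ξ e)
  def brenME (ξ : ℕ → ℕ) : BCt → BCt
    | .cvar a => .cvar (ξ a)
    | .cons t e => .cons (brenMT ξ t) (brenME ξ e)
    | .tmu c => .tmu (brenMC ξ c)
end

def bupsL (σ : ℕ → BTm) : ℕ → BTm
  | 0 => .var 0
  | k+1 => brenLT Nat.succ (σ k)

mutual
  /-- Substitution for λ-variables in λ̄μμ̃-terms. -/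
  def blsubT (σ : ℕ → BTm) : BTm → BTm
    | .var x => σ x
    | .abs t => .abs (blsubT (bupsL σ) t)
    | .mabs c => .mabs (blsubC (fun k => brenMT Nat.succ (σ k)) c)
  def blsubC (σ : ℕ → BTm) : BCm → BCm
    | .cut t e => .cut (blsubT σ t) (blsubE σ e)
  def blsubE (σ : ℕ → BTm) : BCt → BCt
    | .cvar a => .cvar a
    | .cons t e => .cons (blsubT σ t) (blsubE σ e)
    | .tmu c => .tmu (blsubC (bupsL σ) c)
end

def bsub1L (x : ℕ) (u : BTm) : ℕ → BTm := fun k => if k = x then u else .var k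

def bsub0L (u : BTm) : ℕ → BTm
  | 0 => u
  | k+1 => .var k

def bupsM (σ : ℕ → BCt) : ℕ → BCt
  | 0 => .cvar 0
  | k+1 => brenME Nat.succ (σ k)

mutual
  /-- Structural substitution of contexts for μ-variables in λ̄μμ̃-terms. -/
  def bmsubT (σ : ℕ → BCt) : BTm → BTm
    | .var x => .var x
    | .abs t => .abs (bmsubT (fun k => brenLE Nat.succ (σ k)) t)
    | .mabs c => .mabs (bmsubC (bupsM σ) c)
  def bmsubC (σ : ℕ → BCt) : BCm → BCm
    | .cut t e => .cut (bmsubT σ t) (bmsubE σ e)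
  def bmsubE (σ : ℕ → BCt) : BCt → BCt
    | .cvar a => σ a
    | .cons t e => .cons (bmsubT σ t) (bmsubE σ e)
    | .tmu c => .tmu (bmsubC (fun k => brenLE Nat.succ (σ k)) c)
end

def bsub1M (a : ℕ) (e : BCt) : ℕ → BCt := fun k => if k = a then e else .cvar k

def bsub0M (e : BCt) : ℕ → BCt
  | 0 => e
  | k+1 => .cvar k

mutual
  /-- Number of free occurrences of the λ-variable `x` in a λ̄μμ̃-term. -/
  def bcntLT (x : ℕ) : BTm → ℕ
    | .var y => if y = x then 1 else 0
    | .abs t => bcntLT (x+1) t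
    | .mabs c => bcntLC x c
  def bcntLC (x : ℕ) : BCm → ℕ
    | .cut t e => bcntLT x t + bcntLE x e
  def bcntLE (x : ℕ) : BCt → ℕ
    | .cvar _ => 0
    | .cons t e => bcntLT x t + bcntLE x e
    | .tmu c => bcntLC (x+1) c
end

mutual
  /-- Number of free occurrences of the μ-variable `a` in a λ̄μμ̃-term. -/
  def bcntMT (a : ℕ) : BTm → ℕ
    | .var _ => 0
    | .abs t => bcntMT a t
    | .mabs c => bcntMC (a+1) c
  def bcntMC (a : ℕ) : BCm → ℕ
    | .cut t e => bcntMT a t + bcntME a e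
  def bcntME (a : ℕ) : BCt → ℕ
    | .cvar b => if b = a then 1 else 0
    | .cons t e => bcntMT a t + bcntME a e
    | .tmu c => bcntMC a c
end

/-- λ̄μμ̃-values `v ::= x | λx.t`. -/
inductive BIsVal : BTm → Prop
  | var (x : ℕ) : BIsVal (.var x)
  | abs (t : BTm) : BIsVal (.abs t)

/-- Stacks (the contexts of λ̄μμ̃_T): `s ::= α | t · s`. -/
inductive IsStk : BCt → Prop
  | cvar (a : ℕ) : IsStk (.cvar a)
  | cons (t : BTm) {s : BCt} : IsStk s → IsStk (.cons t s)

/-! ### Reduction in λ̄μμ̃: congruence closure of root rules -/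

mutual
  inductive JT (R1 : BTm → BTm → Prop) (R2 : BCm → BCm → Prop) : BTm → BTm → Prop
    | root {t t'} : R1 t t' → JT R1 R2 t t'
    | absC {t t'} : JT R1 R2 t t' → JT R1 R2 (.abs t) (.abs t')
    | mabsC {c c'} : JC R1 R2 c c' → JT R1 R2 (.mabs c) (.mabs c')
  inductive JC (R1 : BTm → BTm → Prop) (R2 : BCm → BCm → Prop) : BCm → BCm → Prop
    | root {c c'} : R2 c c' → JC R1 R2 c c'
    | cutL {t t'} (e) : JT R1 R2 t t' → JC R1 R2 (.cut t e) (.cut t' e)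
    | cutR (t) {e e'} : JE R1 R2 e e' → JC R1 R2 (.cut t e) (.cut t e')
  inductive JE (R1 : BTm → BTm → Prop) (R2 : BCm → BCm → Prop) : BCt → BCt → Prop
    | consL {t t'} (e) : JT R1 R2 t t' → JE R1 R2 (.cons t e) (.cons t' e)
    | consR (t) {e e'} : JE R1 R2 e e' → JE R1 R2 (.cons t e) (.cons t e')
    | tmuC {c c'} : JC R1 R2 c c' → JE R1 R2 (.tmu c) (.tmu c')
end

/-- The term-level root rule of λ̄μμ̃: θ (shared by all evaluation disciplines). -/
inductive BRootT : BTm → BTm → Prop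
  | theta (t : BTm) : BRootT (.mabs (.cut (brenMT Nat.succ t) (.cvar 0))) t

/-- Command-level root rules of the undirected λ̄μμ̃-calculus: β, μ, μ̃. -/
inductive BRootC : BCm → BCm → Prop
  | beta (u t : BTm) (e : BCt) :
      BRootC (.cut (.abs u) (.cons t e)) (.cut t (.tmu (.cut u (brenLE Nat.succ e))))
  | mu (c : BCm) (e : BCt) : BRootC (.cut (.mabs c) e) (bmsubC (bsub0M e) c)
  | mutilde (t : BTm) (c : BCm) : BRootC (.cut t (.tmu c)) (blsubC (bsub0L t) c)

/-- Command-level *linear* root rules of λ̄μμ̃: β always; μ (resp. μ̃) when the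
substituted context (resp. term) is a variable or the bound variable occurs
exactly once in the command. -/
inductive BRootClin : BCm → BCm → Prop
  | beta (u t : BTm) (e : BCt) :
      BRootClin (.cut (.abs u) (.cons t e)) (.cut t (.tmu (.cut u (brenLE Nat.succ e))))
  | mu (c : BCm) (e : BCt) : ((∃ a, e = BCt.cvar a) ∨ bcntMC 0 c = 1) →
      BRootClin (.cut (.mabs c) e) (bmsubC (bsub0M e) c)
  | mutilde (t : BTm) (c : BCm) : ((∃ x, t = BTm.var x) ∨ bcntLC 0 c = 1) →
      BRootClin (.cut t (.tmu c)) (blsubC (bsub0L t) c)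

/-- Command-level root rules of call-by-name λ̄μμ̃ (λ̄μμ̃_T): β, μₙ (stacks), μ̃. -/
inductive BRootCn : BCm → BCm → Prop
  | beta (u t : BTm) (e : BCt) :
      BRootCn (.cut (.abs u) (.cons t e)) (.cut t (.tmu (.cut u (brenLE Nat.succ e))))
  | mun (c : BCm) (s : BCt) : IsStk s → BRootCn (.cut (.mabs c) s) (bmsubC (bsub0M s) c)
  | mutilde (t : BTm) (c : BCm) : BRootCn (.cut t (.tmu c)) (blsubC (bsub0L t) c)

/-- Command-level *linear call-by-name* root rules of λ̄μμ̃. -/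
inductive BRootCnlin : BCm → BCm → Prop
  | beta (u t : BTm) (e : BCt) :
      BRootCnlin (.cut (.abs u) (.cons t e)) (.cut t (.tmu (.cut u (brenLE Nat.succ e))))
  | mun (c : BCm) (s : BCt) : IsStk s → ((∃ a, s = BCt.cvar a) ∨ bcntMC 0 c = 1) →
      BRootCnlin (.cut (.mabs c) s) (bmsubC (bsub0M s) c)
  | mutilde (t : BTm) (c : BCm) : ((∃ x, t = BTm.var x) ∨ bcntLC 0 c = 1) →
      BRootCnlin (.cut t (.tmu c)) (blsubC (bsub0L t) c)

/-- Command-level root rules of call-by-value λ̄μμ̃ (λ̄μμ̃_Q): β, μ, μ̃ᵥ (values). -/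
inductive BRootCv : BCm → BCm → Prop
  | beta (u t : BTm) (e : BCt) :
      BRootCv (.cut (.abs u) (.cons t e)) (.cut t (.tmu (.cut u (brenLE Nat.succ e))))
  | mu (c : BCm) (e : BCt) : BRootCv (.cut (.mabs c) e) (bmsubC (bsub0M e) c)
  | mutildev (v : BTm) (c : BCm) : BIsVal v →
      BRootCv (.cut v (.tmu c)) (blsubC (bsub0L v) c)

/-- Command-level *linear call-by-value* root rules of λ̄μμ̃. -/
inductive BRootCvlin : BCm → BCm → Prop
  | beta (u t : BTm) (e : BCt) :
      BRootCvlin (.cut (.abs u) (.cons t e)) (.cut t (.tmu (.cut u (brenLE Nat.succ e))))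
  | mu (c : BCm) (e : BCt) : ((∃ a, e = BCt.cvar a) ∨ bcntMC 0 c = 1) →
      BRootCvlin (.cut (.mabs c) e) (bmsubC (bsub0M e) c)
  | mutildev (v : BTm) (c : BCm) : BIsVal v → ((∃ x, v = BTm.var x) ∨ bcntLC 0 c = 1) →
      BRootCvlin (.cut v (.tmu c)) (blsubC (bsub0L v) c)

/-- Command-level root rules with β' instead of β: β', μ, μ̃. -/
inductive BRootCp : BCm → BCm → Prop
  | beta' (u t : BTm) (e : BCt) :
      BRootCp (.cut (.abs u) (.cons t e)) (.cut (blsubT (bsub0L t) u) e)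
  | mu (c : BCm) (e : BCt) : BRootCp (.cut (.mabs c) e) (bmsubC (bsub0M e) c)
  | mutilde (t : BTm) (c : BCm) : BRootCp (.cut t (.tmu c)) (blsubC (bsub0L t) c)

/-- Command-level call-by-name root rules with β': β', μₙ, μ̃. -/
inductive BRootCnp : BCm → BCm → Prop
  | beta' (u t : BTm) (e : BCt) :
      BRootCnp (.cut (.abs u) (.cons t e)) (.cut (blsubT (bsub0L t) u) e)
  | mun (c : BCm) (s : BCt) : IsStk s → BRootCnp (.cut (.mabs c) s) (bmsubC (bsub0M s) c)
  | mutilde (t : BTm) (c : BCm) : BRootCnp (.cut t (.tmu c)) (blsubC (bsub0L t) c)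

/-- Command-level call-by-value root rules with β': β' (values), μ, μ̃ᵥ. -/
inductive BRootCvp : BCm → BCm → Prop
  | beta' (u v : BTm) (e : BCt) : BIsVal v →
      BRootCvp (.cut (.abs u) (.cons v e)) (.cut (blsubT (bsub0L v) u) e)
  | mu (c : BCm) (e : BCt) : BRootCvp (.cut (.mabs c) e) (bmsubC (bsub0M e) c)
  | mutildev (v : BTm) (c : BCm) : BIsVal v →
      BRootCvp (.cut v (.tmu c)) (blsubC (bsub0L v) c)

/-- One-step λ̄μμ̃-reduction (β, μ, μ̃, θ), terms. -/
abbrev BStepT := JT BRootT BRootC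
abbrev BStepC := JC BRootT BRootC
abbrev BStepE := JE BRootT BRootC
/-- One-step linear λ̄μμ̃-reduction. -/
abbrev LBStepT := JT BRootT BRootClin
abbrev LBStepC := JC BRootT BRootClin
abbrev LBStepE := JE BRootT BRootClin
/-- One-step call-by-name λ̄μμ̃-reduction. -/
abbrev BStepNT := JT BRootT BRootCn
abbrev BStepNC := JC BRootT BRootCn
abbrev BStepNE := JE BRootT BRootCn
/-- One-step linear call-by-name λ̄μμ̃-reduction. -/
abbrev LBStepNT := JT BRootT BRootCnlin
abbrev LBStepNC := JC BRootT BRootCnlin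
/-- One-step call-by-value λ̄μμ̃-reduction. -/
abbrev BStepVT := JT BRootT BRootCv
abbrev BStepVC := JC BRootT BRootCv
/-- One-step linear call-by-value λ̄μμ̃-reduction. -/
abbrev LBStepVT := JT BRootT BRootCvlin
abbrev LBStepVC := JC BRootT BRootCvlin
/-- One-step λ̄μμ̃-reduction with β' (β', μ, μ̃, θ). -/
abbrev BStepPT := JT BRootT BRootCp
abbrev BStepPC := JC BRootT BRootCp
/-- One-step call-by-name λ̄μμ̃-reduction with β'. -/
abbrev BStepNPT := JT BRootT BRootCnp
abbrev BStepNPC := JC BRootT BRootCnp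
/-- One-step call-by-value λ̄μμ̃-reduction with β'. -/
abbrev BStepVPT := JT BRootT BRootCvp
abbrev BStepVPC := JC BRootT BRootCvp

/-! ## The translation `(·)†` from λμ to λ̄μμ̃ -/

mutual
  /-- `x† = x`, `(λx.u)† = λx.u†`, `(u v)† = μβ.⟨v† | μ̃y.⟨u† | y·β⟩⟩`
  (`y`, `β` fresh, realized by de Bruijn lifting), `(μα.c)† = μα.c†`. -/
  def dagT : Tm → BTm
    | .var x => .var x
    | .abs t => .abs (dagT t)
    | .app u v => .mabs (.cut (brenMT Nat.succ (dagT v))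
        (.tmu (.cut (brenLT Nat.succ (brenMT Nat.succ (dagT u)))
          (.cons (.var 0) (.cvar 0)))))
    | .mabs c => .mabs (dagC c)
  /-- `([α]t)† = ⟨t† | α⟩`. -/
  def dagC : Cm → BCm
    | .cmd a t => .cut (dagT t) (.cvar a)
end

/-- `⟨α⟩† = α`, `(⟨β⟩(t ·))† = μ̃y.⟨t† | y·β⟩`, `(h · t)† = t† · h†`. -/
def dagE : Ct → BCt
  | .cvar a => .cvar a
  | .push b t => .tmu (.cut (brenLT Nat.succ (dagT t)) (.cons (.var 0) (.cvar b)))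
  | .cons e t => .cons (dagT t) (dagE e)

/-! ## The translation `(·)∘` from λ̄μμ̃ to λμ -/

mutual
  /-- `x∘ = x`, `(λx.u)∘ = λx.u∘`, `(μα.c)∘ = μα.c∘`. -/
  def circT : BTm → Tm
    | .var x => .var x
    | .abs t => .abs (circT t)
    | .mabs c => .mabs (circC c)
  /-- `⟨t | e⟩∘ = e∘⟨t∘⟩`. -/
  def circC : BCm → Cm
    | .cut t e => fill (circE e) (circT t)
  /-- `α∘ = ⟨α⟩`, `(t · h)∘ = h∘ · t∘`,
  `(μ̃x.c)∘ = ⟨β⟩((λx.μδ.c∘) ·)` with `δ ∉ c` (realized by lifting). -/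
  def circE : BCt → Ct
    | .cvar a => .cvar a
    | .cons t e => .cons (circE e) (circT t)
    | .tmu c => .push 0 (.abs (.mabs (renMC Nat.succ (circC c))))
end


/-! ### Auxiliary algebra of renamings and substitutions in λ̄μμ̃ -/

theorem upr_comp (ξ ζ : ℕ → ℕ) : (fun k => upr ξ (upr ζ k)) = upr (fun n => ξ (ζ n)) := by
  funext k; cases k <;> rfl

mutual
theorem brenLL_T (ξ ζ : ℕ → ℕ) (t : BTm) :
    brenLT ξ (brenLT ζ t) = brenLT (fun k => ξ (ζ k)) t := by
  cases t with
  | var x => rfl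
  | abs t => simp only [brenLT, brenLL_T (upr ξ) (upr ζ) t, upr_comp]
  | mabs c => simp only [brenLT, brenLL_C ξ ζ c]
theorem brenLL_C (ξ ζ : ℕ → ℕ) (c : BCm) :
    brenLC ξ (brenLC ζ c) = brenLC (fun k => ξ (ζ k)) c := by
  cases c with
  | cut t e => simp only [brenLC, brenLL_T ξ ζ t, brenLL_E ξ ζ e]
theorem brenLL_E (ξ ζ : ℕ → ℕ) (e : BCt) :
    brenLE ξ (brenLE ζ e) = brenLE (fun k => ξ (ζ k)) e := by
  cases e with
  | cvar a => rfl
  | cons t e => simp only [brenLE, brenLL_T ξ ζ t, brenLL_E ξ ζ e]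
  | tmu c => simp only [brenLE, brenLL_C (upr ξ) (upr ζ) c, upr_comp]
end

mutual
theorem brenMM_T (ξ ζ : ℕ → ℕ) (t : BTm) :
    brenMT ξ (brenMT ζ t) = brenMT (fun k => ξ (ζ k)) t := by
  cases t with
  | var x => rfl
  | abs t => simp only [brenMT, brenMM_T ξ ζ t]
  | mabs c => simp only [brenMT, brenMM_C (upr ξ) (upr ζ) c, upr_comp]
theorem brenMM_C (ξ ζ : ℕ → ℕ) (c : BCm) :
    brenMC ξ (brenMC ζ c) = brenMC (fun k => ξ (ζ k)) c := by
  cases c with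
  | cut t e => simp only [brenMC, brenMM_T ξ ζ t, brenMM_E ξ ζ e]
theorem brenMM_E (ξ ζ : ℕ → ℕ) (e : BCt) :
    brenME ξ (brenME ζ e) = brenME (fun k => ξ (ζ k)) e := by
  cases e with
  | cvar a => rfl
  | cons t e => simp only [brenME, brenMM_T ξ ζ t, brenMM_E ξ ζ e]
  | tmu c => simp only [brenME, brenMM_C ξ ζ c]
end

mutual
theorem brenLM_T (ξ ζ : ℕ → ℕ) (t : BTm) :
    brenLT ξ (brenMT ζ t) = brenMT ζ (brenLT ξ t) := by
  cases t with
  | var x => rfl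
  | abs t => simp only [brenLT, brenMT, brenLM_T (upr ξ) ζ t]
  | mabs c => simp only [brenLT, brenMT, brenLM_C ξ (upr ζ) c]
theorem brenLM_C (ξ ζ : ℕ → ℕ) (c : BCm) :
    brenLC ξ (brenMC ζ c) = brenMC ζ (brenLC ξ c) := by
  cases c with
  | cut t e => simp only [brenLC, brenMC, brenLM_T ξ ζ t, brenLM_E ξ ζ e]
theorem brenLM_E (ξ ζ : ℕ → ℕ) (e : BCt) :
    brenLE ξ (brenME ζ e) = brenME ζ (brenLE ξ e) := by
  cases e with
  | cvar a => rfl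
  | cons t e => simp only [brenLE, brenME, brenLM_T ξ ζ t, brenLM_E ξ ζ e]
  | tmu c => simp only [brenLE, brenME, brenLM_C (upr ξ) ζ c]
end

theorem bupsL_comp (σ : ℕ → BTm) (ζ : ℕ → ℕ) :
    (fun k => bupsL σ (upr ζ k)) = bupsL (fun k => σ (ζ k)) := by
  funext k; cases k <;> rfl

mutual
theorem blsub_brenL_T (σ : ℕ → BTm) (ζ : ℕ → ℕ) (t : BTm) :
    blsubT σ (brenLT ζ t) = blsubT (fun k => σ (ζ k)) t := by
  cases t with
  | var x => rfl
  | abs t => simp only [brenLT, blsubT, blsub_brenL_T (bupsL σ) (upr ζ) t, bupsL_comp]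
  | mabs c => simp only [brenLT, blsubT, blsub_brenL_C _ ζ c]
theorem blsub_brenL_C (σ : ℕ → BTm) (ζ : ℕ → ℕ) (c : BCm) :
    blsubC σ (brenLC ζ c) = blsubC (fun k => σ (ζ k)) c := by
  cases c with
  | cut t e => simp only [brenLC, blsubC, blsub_brenL_T σ ζ t, blsub_brenL_E σ ζ e]
theorem blsub_brenL_E (σ : ℕ → BTm) (ζ : ℕ → ℕ) (e : BCt) :
    blsubE σ (brenLE ζ e) = blsubE (fun k => σ (ζ k)) e := by
  cases e with
  | cvar a => rfl
  | cons t e => simp only [brenLE, blsubE, blsub_brenL_T σ ζ t, blsub_brenL_E σ ζ e]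
  | tmu c => simp only [brenLE, blsubE, blsub_brenL_C (bupsL σ) (upr ζ) c, bupsL_comp]
end

theorem bupsM_comp (σ : ℕ → BCt) (ζ : ℕ → ℕ) :
    (fun k => bupsM σ (upr ζ k)) = bupsM (fun k => σ (ζ k)) := by
  funext k; cases k <;> rfl

mutual
theorem bmsub_brenM_T (σ : ℕ → BCt) (ζ : ℕ → ℕ) (t : BTm) :
    bmsubT σ (brenMT ζ t) = bmsubT (fun k => σ (ζ k)) t := by
  cases t with
  | var x => rfl
  | abs t => simp only [brenMT, bmsubT, bmsub_brenM_T _ ζ t]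
  | mabs c => simp only [brenMT, bmsubT, bmsub_brenM_C (bupsM σ) (upr ζ) c, bupsM_comp]
theorem bmsub_brenM_C (σ : ℕ → BCt) (ζ : ℕ → ℕ) (c : BCm) :
    bmsubC σ (brenMC ζ c) = bmsubC (fun k => σ (ζ k)) c := by
  cases c with
  | cut t e => simp only [brenMC, bmsubC, bmsub_brenM_T σ ζ t, bmsub_brenM_E σ ζ e]
theorem bmsub_brenM_E (σ : ℕ → BCt) (ζ : ℕ → ℕ) (e : BCt) :
    bmsubE σ (brenME ζ e) = bmsubE (fun k => σ (ζ k)) e := by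
  cases e with
  | cvar a => rfl
  | cons t e => simp only [brenME, bmsubE, bmsub_brenM_T σ ζ t, bmsub_brenM_E σ ζ e]
  | tmu c => simp only [brenME, bmsubE, bmsub_brenM_C _ ζ c]
end

theorem bupsL_id : bupsL (fun k => BTm.var k) = fun k => BTm.var k := by
  funext k; cases k <;> rfl

mutual
theorem blsub_id_T (t : BTm) : blsubT (fun k => BTm.var k) t = t := by
  cases t with
  | var x => rfl
  | abs t => simp only [blsubT, bupsL_id, blsub_id_T t]
  | mabs c =>
      simp only [blsubT]
      have : (fun k => brenMT Nat.succ (BTm.var k)) = fun k => BTm.var k := by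
        funext k; rfl
      rw [this, blsub_id_C c]
theorem blsub_id_C (c : BCm) : blsubC (fun k => BTm.var k) c = c := by
  cases c with
  | cut t e => simp only [blsubC, blsub_id_T t, blsub_id_E e]
theorem blsub_id_E (e : BCt) : blsubE (fun k => BTm.var k) e = e := by
  cases e with
  | cvar a => rfl
  | cons t e => simp only [blsubE, blsub_id_T t, blsub_id_E e]
  | tmu c => simp only [blsubE, bupsL_id, blsub_id_C c]
end

theorem bupsM_id : bupsM (fun k => BCt.cvar k) = fun k => BCt.cvar k := by
  funext k; cases k <;> rfl

mutual
theorem bmsub_id_T (t : BTm) : bmsubT (fun k => BCt.cvar k) t = t := by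
  cases t with
  | var x => rfl
  | abs t =>
      simp only [bmsubT]
      have : (fun k => brenLE Nat.succ (BCt.cvar k)) = fun k => BCt.cvar k := by
        funext k; rfl
      rw [this, bmsub_id_T t]
  | mabs c => simp only [bmsubT, bupsM_id, bmsub_id_C c]
theorem bmsub_id_C (c : BCm) : bmsubC (fun k => BCt.cvar k) c = c := by
  cases c with
  | cut t e => simp only [bmsubC, bmsub_id_T t, bmsub_id_E e]
theorem bmsub_id_E (e : BCt) : bmsubE (fun k => BCt.cvar k) e = e := by
  cases e with
  | cvar a => rfl
  | cons t e => simp only [bmsubE, bmsub_id_T t, bmsub_id_E e]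
  | tmu c =>
      simp only [bmsubE]
      have : (fun k => brenLE Nat.succ (BCt.cvar k)) = fun k => BCt.cvar k := by
        funext k; rfl
      rw [this, bmsub_id_C c]
end
theorem brenL_bupsL (ξ : ℕ → ℕ) (σ : ℕ → BTm) :
    (fun k => brenLT (upr ξ) (bupsL σ k)) = bupsL (fun k => brenLT ξ (σ k)) := by
  funext k; cases k with
  | zero => rfl
  | succ k =>
      show brenLT (upr ξ) (brenLT Nat.succ (σ k)) = brenLT Nat.succ (brenLT ξ (σ k))
      rw [brenLL_T, brenLL_T]; rfl

mutual
theorem brenL_blsub_T (ξ : ℕ → ℕ) (σ : ℕ → BTm) (t : BTm) :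
    brenLT ξ (blsubT σ t) = blsubT (fun k => brenLT ξ (σ k)) t := by
  cases t with
  | var x => rfl
  | abs t => simp only [blsubT, brenLT, brenL_blsub_T (upr ξ) (bupsL σ) t, brenL_bupsL]
  | mabs c =>
      simp only [blsubT, brenLT, brenL_blsub_C ξ _ c]
      have : (fun k => brenLT ξ (brenMT Nat.succ (σ k)))
           = fun k => brenMT Nat.succ (brenLT ξ (σ k)) := by
        funext k; rw [brenLM_T]
      rw [this]
theorem brenL_blsub_C (ξ : ℕ → ℕ) (σ : ℕ → BTm) (c : BCm) :
    brenLC ξ (blsubC σ c) = blsubC (fun k => brenLT ξ (σ k)) c := by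
  cases c with
  | cut t e => simp only [blsubC, brenLC, brenL_blsub_T ξ σ t, brenL_blsub_E ξ σ e]
theorem brenL_blsub_E (ξ : ℕ → ℕ) (σ : ℕ → BTm) (e : BCt) :
    brenLE ξ (blsubE σ e) = blsubE (fun k => brenLT ξ (σ k)) e := by
  cases e with
  | cvar a => rfl
  | cons t e => simp only [blsubE, brenLE, brenL_blsub_T ξ σ t, brenL_blsub_E ξ σ e]
  | tmu c => simp only [blsubE, brenLE, brenL_blsub_C (upr ξ) (bupsL σ) c, brenL_bupsL]
end

theorem brenM_bupsM (ξ : ℕ → ℕ) (σ : ℕ → BCt) :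
    (fun k => brenME (upr ξ) (bupsM σ k)) = bupsM (fun k => brenME ξ (σ k)) := by
  funext k; cases k with
  | zero => rfl
  | succ k =>
      show brenME (upr ξ) (brenME Nat.succ (σ k)) = brenME Nat.succ (brenME ξ (σ k))
      rw [brenMM_E, brenMM_E]; rfl

mutual
theorem brenM_bmsub_T (ξ : ℕ → ℕ) (σ : ℕ → BCt) (t : BTm) :
    brenMT ξ (bmsubT σ t) = bmsubT (fun k => brenME ξ (σ k)) t := by
  cases t with
  | var x => rfl
  | abs t =>
      simp only [bmsubT, brenMT, brenM_bmsub_T ξ _ t]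
      have : (fun k => brenME ξ (brenLE Nat.succ (σ k)))
           = fun k => brenLE Nat.succ (brenME ξ (σ k)) := by
        funext k; rw [← brenLM_E]
      rw [this]
  | mabs c => simp only [bmsubT, brenMT, brenM_bmsub_C (upr ξ) (bupsM σ) c, brenM_bupsM]
theorem brenM_bmsub_C (ξ : ℕ → ℕ) (σ : ℕ → BCt) (c : BCm) :
    brenMC ξ (bmsubC σ c) = bmsubC (fun k => brenME ξ (σ k)) c := by
  cases c with
  | cut t e => simp only [bmsubC, brenMC, brenM_bmsub_T ξ σ t, brenM_bmsub_E ξ σ e]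
theorem brenM_bmsub_E (ξ : ℕ → ℕ) (σ : ℕ → BCt) (e : BCt) :
    brenME ξ (bmsubE σ e) = bmsubE (fun k => brenME ξ (σ k)) e := by
  cases e with
  | cvar a => rfl
  | cons t e => simp only [bmsubE, brenME, brenM_bmsub_T ξ σ t, brenM_bmsub_E ξ σ e]
  | tmu c =>
      simp only [bmsubE, brenME, brenM_bmsub_C ξ _ c]
      have : (fun k => brenME ξ (brenLE Nat.succ (σ k)))
           = fun k => brenLE Nat.succ (brenME ξ (σ k)) := by
        funext k; rw [← brenLM_E]
      rw [this]
end

theorem brenM_bupsL (ξ : ℕ → ℕ) (σ : ℕ → BTm) :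
    (fun k => brenMT ξ (bupsL σ k)) = bupsL (fun k => brenMT ξ (σ k)) := by
  funext k; cases k with
  | zero => rfl
  | succ k =>
      show brenMT ξ (brenLT Nat.succ (σ k)) = brenLT Nat.succ (brenMT ξ (σ k))
      rw [← brenLM_T]

mutual
theorem brenM_blsub_T (ξ : ℕ → ℕ) (σ : ℕ → BTm) (t : BTm) :
    brenMT ξ (blsubT σ t) = blsubT (fun k => brenMT ξ (σ k)) (brenMT ξ t) := by
  cases t with
  | var x => rfl
  | abs t => simp only [blsubT, brenMT, brenM_blsub_T ξ (bupsL σ) t, brenM_bupsL]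
  | mabs c =>
      simp only [blsubT, brenMT, brenM_blsub_C (upr ξ) _ c]
      have : (fun k => brenMT (upr ξ) (brenMT Nat.succ (σ k)))
           = fun k => brenMT Nat.succ (brenMT ξ (σ k)) := by
        funext k; rw [brenMM_T, brenMM_T]; rfl
      rw [this]
theorem brenM_blsub_C (ξ : ℕ → ℕ) (σ : ℕ → BTm) (c : BCm) :
    brenMC ξ (blsubC σ c) = blsubC (fun k => brenMT ξ (σ k)) (brenMC ξ c) := by
  cases c with
  | cut t e => simp only [blsubC, brenMC, brenM_blsub_T ξ σ t, brenM_blsub_E ξ σ e]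
theorem brenM_blsub_E (ξ : ℕ → ℕ) (σ : ℕ → BTm) (e : BCt) :
    brenME ξ (blsubE σ e) = blsubE (fun k => brenMT ξ (σ k)) (brenME ξ e) := by
  cases e with
  | cvar a => rfl
  | cons t e => simp only [blsubE, brenME, brenM_blsub_T ξ σ t, brenM_blsub_E ξ σ e]
  | tmu c => simp only [blsubE, brenME, brenM_blsub_C ξ (bupsL σ) c, brenM_bupsL]
end

theorem brenL_bupsM (ξ : ℕ → ℕ) (σ : ℕ → BCt) :
    (fun k => brenLE ξ (bupsM σ k)) = bupsM (fun k => brenLE ξ (σ k)) := by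
  funext k; cases k with
  | zero => rfl
  | succ k =>
      show brenLE ξ (brenME Nat.succ (σ k)) = brenME Nat.succ (brenLE ξ (σ k))
      rw [brenLM_E]

mutual
theorem brenL_bmsub_T (ξ : ℕ → ℕ) (σ : ℕ → BCt) (t : BTm) :
    brenLT ξ (bmsubT σ t) = bmsubT (fun k => brenLE ξ (σ k)) (brenLT ξ t) := by
  cases t with
  | var x => rfl
  | abs t =>
      simp only [bmsubT, brenLT, brenL_bmsub_T (upr ξ) _ t]
      have : (fun k => brenLE (upr ξ) (brenLE Nat.succ (σ k)))
           = fun k => brenLE Nat.succ (brenLE ξ (σ k)) := by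
        funext k; rw [brenLL_E, brenLL_E]; rfl
      rw [this]
  | mabs c => simp only [bmsubT, brenLT, brenL_bmsub_C ξ (bupsM σ) c, brenL_bupsM]
theorem brenL_bmsub_C (ξ : ℕ → ℕ) (σ : ℕ → BCt) (c : BCm) :
    brenLC ξ (bmsubC σ c) = bmsubC (fun k => brenLE ξ (σ k)) (brenLC ξ c) := by
  cases c with
  | cut t e => simp only [bmsubC, brenLC, brenL_bmsub_T ξ σ t, brenL_bmsub_E ξ σ e]
theorem brenL_bmsub_E (ξ : ℕ → ℕ) (σ : ℕ → BCt) (e : BCt) :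
    brenLE ξ (bmsubE σ e) = bmsubE (fun k => brenLE ξ (σ k)) (brenLE ξ e) := by
  cases e with
  | cvar a => rfl
  | cons t e => simp only [bmsubE, brenLE, brenL_bmsub_T ξ σ t, brenL_bmsub_E ξ σ e]
  | tmu c =>
      simp only [bmsubE, brenLE, brenL_bmsub_C (upr ξ) _ c]
      have : (fun k => brenLE (upr ξ) (brenLE Nat.succ (σ k)))
           = fun k => brenLE Nat.succ (brenLE ξ (σ k)) := by
        funext k; rw [brenLL_E, brenLL_E]; rfl
      rw [this]
end
/-! ### Count and value lemmas -/

mutual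
theorem cntM_renM_T (a b : ℕ) (ξ : ℕ → ℕ) (h : ∀ k, ξ k = a ↔ k = b) (t : BTm) :
    bcntMT a (brenMT ξ t) = bcntMT b t := by
  cases t with
  | var x => rfl
  | abs t => simp only [brenMT, bcntMT, cntM_renM_T a b ξ h t]
  | mabs c =>
      simp only [brenMT, bcntMT]
      exact cntM_renM_C (a+1) (b+1) (upr ξ)
        (by intro k; cases k with
            | zero => simp [upr]
            | succ k => simpa [upr] using h k) c
theorem cntM_renM_C (a b : ℕ) (ξ : ℕ → ℕ) (h : ∀ k, ξ k = a ↔ k = b) (c : BCm) :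
    bcntMC a (brenMC ξ c) = bcntMC b c := by
  cases c with
  | cut t e => simp only [brenMC, bcntMC, cntM_renM_T a b ξ h t, cntM_renM_E a b ξ h e]
theorem cntM_renM_E (a b : ℕ) (ξ : ℕ → ℕ) (h : ∀ k, ξ k = a ↔ k = b) (e : BCt) :
    bcntME a (brenME ξ e) = bcntME b e := by
  cases e with
  | cvar c => simp only [brenME, bcntME, h c]
  | cons t e => simp only [brenME, bcntME, cntM_renM_T a b ξ h t, cntM_renM_E a b ξ h e]
  | tmu c => simp only [brenME, bcntME, cntM_renM_C a b ξ h c]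
end

mutual
theorem cntM0_renM_T (a : ℕ) (ξ : ℕ → ℕ) (h : ∀ k, ξ k ≠ a) (t : BTm) :
    bcntMT a (brenMT ξ t) = 0 := by
  cases t with
  | var x => rfl
  | abs t => simp only [brenMT, bcntMT, cntM0_renM_T a ξ h t]
  | mabs c =>
      simp only [brenMT, bcntMT]
      exact cntM0_renM_C (a+1) (upr ξ)
        (by intro k; cases k with
            | zero => simp [upr]
            | succ k => simpa [upr] using h k) c
theorem cntM0_renM_C (a : ℕ) (ξ : ℕ → ℕ) (h : ∀ k, ξ k ≠ a) (c : BCm) :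
    bcntMC a (brenMC ξ c) = 0 := by
  cases c with
  | cut t e => simp only [brenMC, bcntMC, cntM0_renM_T a ξ h t, cntM0_renM_E a ξ h e]
theorem cntM0_renM_E (a : ℕ) (ξ : ℕ → ℕ) (h : ∀ k, ξ k ≠ a) (e : BCt) :
    bcntME a (brenME ξ e) = 0 := by
  cases e with
  | cvar c => simp only [brenME, bcntME, h c, if_false]
  | cons t e => simp only [brenME, bcntME, cntM0_renM_T a ξ h t, cntM0_renM_E a ξ h e]
  | tmu c => simp only [brenME, bcntME, cntM0_renM_C a ξ h c]
end

mutual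
theorem cntM_renL_T (a : ℕ) (ξ : ℕ → ℕ) (t : BTm) :
    bcntMT a (brenLT ξ t) = bcntMT a t := by
  cases t with
  | var x => rfl
  | abs t => simp only [brenLT, bcntMT, cntM_renL_T a (upr ξ) t]
  | mabs c => simp only [brenLT, bcntMT, cntM_renL_C (a+1) ξ c]
theorem cntM_renL_C (a : ℕ) (ξ : ℕ → ℕ) (c : BCm) :
    bcntMC a (brenLC ξ c) = bcntMC a c := by
  cases c with
  | cut t e => simp only [brenLC, bcntMC, cntM_renL_T a ξ t, cntM_renL_E a ξ e]
theorem cntM_renL_E (a : ℕ) (ξ : ℕ → ℕ) (e : BCt) :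
    bcntME a (brenLE ξ e) = bcntME a e := by
  cases e with
  | cvar c => rfl
  | cons t e => simp only [brenLE, bcntME, cntM_renL_T a ξ t, cntM_renL_E a ξ e]
  | tmu c => simp only [brenLE, bcntME, cntM_renL_C a (upr ξ) c]
end

mutual
theorem cntL_renL_T (a b : ℕ) (ξ : ℕ → ℕ) (h : ∀ k, ξ k = a ↔ k = b) (t : BTm) :
    bcntLT a (brenLT ξ t) = bcntLT b t := by
  cases t with
  | var x => simp only [brenLT, bcntLT, h x]
  | abs t =>
      simp only [brenLT, bcntLT]
      exact cntL_renL_T (a+1) (b+1) (upr ξ)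
        (by intro k; cases k with
            | zero => simp [upr]
            | succ k => simpa [upr] using h k) t
  | mabs c => simp only [brenLT, bcntLT, cntL_renL_C a b ξ h c]
theorem cntL_renL_C (a b : ℕ) (ξ : ℕ → ℕ) (h : ∀ k, ξ k = a ↔ k = b) (c : BCm) :
    bcntLC a (brenLC ξ c) = bcntLC b c := by
  cases c with
  | cut t e => simp only [brenLC, bcntLC, cntL_renL_T a b ξ h t, cntL_renL_E a b ξ h e]
theorem cntL_renL_E (a b : ℕ) (ξ : ℕ → ℕ) (h : ∀ k, ξ k = a ↔ k = b) (e : BCt) :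
    bcntLE a (brenLE ξ e) = bcntLE b e := by
  cases e with
  | cvar c => rfl
  | cons t e => simp only [brenLE, bcntLE, cntL_renL_T a b ξ h t, cntL_renL_E a b ξ h e]
  | tmu c =>
      simp only [brenLE, bcntLE]
      exact cntL_renL_C (a+1) (b+1) (upr ξ)
        (by intro k; cases k with
            | zero => simp [upr]
            | succ k => simpa [upr] using h k) c
end

mutual
theorem cntL0_renL_T (a : ℕ) (ξ : ℕ → ℕ) (h : ∀ k, ξ k ≠ a) (t : BTm) :
    bcntLT a (brenLT ξ t) = 0 := by
  cases t with
  | var x => simp only [brenLT, bcntLT, h x, if_false]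
  | abs t =>
      simp only [brenLT, bcntLT]
      exact cntL0_renL_T (a+1) (upr ξ)
        (by intro k; cases k with
            | zero => simp [upr]
            | succ k => simpa [upr] using h k) t
  | mabs c => simp only [brenLT, bcntLT, cntL0_renL_C a ξ h c]
theorem cntL0_renL_C (a : ℕ) (ξ : ℕ → ℕ) (h : ∀ k, ξ k ≠ a) (c : BCm) :
    bcntLC a (brenLC ξ c) = 0 := by
  cases c with
  | cut t e => simp only [brenLC, bcntLC, cntL0_renL_T a ξ h t, cntL0_renL_E a ξ h e]
theorem cntL0_renL_E (a : ℕ) (ξ : ℕ → ℕ) (h : ∀ k, ξ k ≠ a) (e : BCt) :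
    bcntLE a (brenLE ξ e) = 0 := by
  cases e with
  | cvar c => rfl
  | cons t e => simp only [brenLE, bcntLE, cntL0_renL_T a ξ h t, cntL0_renL_E a ξ h e]
  | tmu c =>
      simp only [brenLE, bcntLE]
      exact cntL0_renL_C (a+1) (upr ξ)
        (by intro k; cases k with
            | zero => simp [upr]
            | succ k => simpa [upr] using h k) c
end

mutual
theorem cntL_renM_T (a : ℕ) (ξ : ℕ → ℕ) (t : BTm) :
    bcntLT a (brenMT ξ t) = bcntLT a t := by
  cases t with
  | var x => rfl
  | abs t => simp only [brenMT, bcntLT, cntL_renM_T (a+1) ξ t]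
  | mabs c => simp only [brenMT, bcntLT, cntL_renM_C a (upr ξ) c]
theorem cntL_renM_C (a : ℕ) (ξ : ℕ → ℕ) (c : BCm) :
    bcntLC a (brenMC ξ c) = bcntLC a c := by
  cases c with
  | cut t e => simp only [brenMC, bcntLC, cntL_renM_T a ξ t, cntL_renM_E a ξ e]
theorem cntL_renM_E (a : ℕ) (ξ : ℕ → ℕ) (e : BCt) :
    bcntLE a (brenME ξ e) = bcntLE a e := by
  cases e with
  | cvar c => rfl
  | cons t e => simp only [brenME, bcntLE, cntL_renM_T a ξ t, cntL_renM_E a ξ e]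
  | tmu c => simp only [brenME, bcntLE, cntL_renM_C (a+1) ξ c]
end

theorem succ_ne (a : ℕ) : ∀ k, Nat.succ k ≠ 0 := fun k => Nat.succ_ne_zero k

theorem BIsVal.renL {v : BTm} (hv : BIsVal v) (ξ : ℕ → ℕ) : BIsVal (brenLT ξ v) := by
  cases hv <;> constructor
theorem BIsVal.renM {v : BTm} (hv : BIsVal v) (ξ : ℕ → ℕ) : BIsVal (brenMT ξ v) := by
  cases hv <;> constructor
theorem IsVal.renL {v : Tm} (hv : IsVal v) (ξ : ℕ → ℕ) : IsVal (renLT ξ v) := by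
  cases hv <;> constructor
theorem IsVal.renM {v : Tm} (hv : IsVal v) (ξ : ℕ → ℕ) : IsVal (renMT ξ v) := by
  cases hv <;> constructor

/-! ### The translation and renamings -/

mutual
theorem dag_renL_T (ξ : ℕ → ℕ) (t : Tm) : dagT (renLT ξ t) = brenLT ξ (dagT t) := by
  cases t with
  | var x => rfl
  | abs t => simp only [renLT, dagT, brenLT, dag_renL_T (upr ξ) t]
  | app u v =>
      simp only [renLT, dagT, brenLT, brenLC, brenLE, dag_renL_T ξ u, dag_renL_T ξ v,
        brenLL_T, brenLM_T]
      rfl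
  | mabs c => simp only [renLT, dagT, brenLT, dag_renL_C ξ c]
theorem dag_renL_C (ξ : ℕ → ℕ) (c : Cm) : dagC (renLC ξ c) = brenLC ξ (dagC c) := by
  cases c with
  | cmd a t => simp only [renLC, dagC, brenLC, dag_renL_T ξ t, brenLE]
end

mutual
theorem dag_renM_T (ξ : ℕ → ℕ) (t : Tm) : dagT (renMT ξ t) = brenMT ξ (dagT t) := by
  cases t with
  | var x => rfl
  | abs t => simp only [renMT, dagT, brenMT, dag_renM_T ξ t]
  | app u v =>
      simp only [renMT, dagT, brenMT, brenMC, brenME, dag_renM_T ξ u, dag_renM_T ξ v,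
        brenMM_T, brenLM_T]
      rfl
  | mabs c => simp only [renMT, dagT, brenMT, dag_renM_C (upr ξ) c]
theorem dag_renM_C (ξ : ℕ → ℕ) (c : Cm) : dagC (renMC ξ c) = brenMC ξ (dagC c) := by
  cases c with
  | cmd a t => simp only [renMC, dagC, brenMC, dag_renM_T ξ t, brenME]
end

theorem dag_renL_E (ξ : ℕ → ℕ) (e : Ct) : dagE (renLE ξ e) = brenLE ξ (dagE e) := by
  cases e with
  | cvar a => rfl
  | push b t =>
      simp only [renLE, dagE, brenLE, brenLC, brenLT, dag_renL_T ξ t, brenLL_T]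
      rfl
  | cons e t => simp only [renLE, dagE, brenLE, dag_renL_T ξ t, dag_renL_E ξ e]

theorem dag_renM_E (ξ : ℕ → ℕ) (e : Ct) : dagE (renME ξ e) = brenME ξ (dagE e) := by
  cases e with
  | cvar a => rfl
  | push b t =>
      simp only [renME, dagE, brenME, brenMC, brenMT, dag_renM_T ξ t, brenLM_T]
  | cons e t => simp only [renME, dagE, brenME, dag_renM_T ξ t, dag_renM_E ξ e]

theorem dag_val {v : Tm} (hv : IsVal v) : BIsVal (dagT v) := by
  cases hv <;> constructor
/-! ### Stability of root rules under renamings -/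

theorem upr_iff0 (ξ : ℕ → ℕ) : ∀ k, upr ξ k = 0 ↔ k = 0 := by
  intro k; cases k <;> simp [upr]

theorem brootT_renL (ξ : ℕ → ℕ) {t t' : BTm} (h : BRootT t t') :
    BRootT (brenLT ξ t) (brenLT ξ t') := by
  cases h with
  | theta s =>
      have h1 : brenLT ξ (BTm.mabs (.cut (brenMT Nat.succ t') (.cvar 0)))
          = BTm.mabs (.cut (brenMT Nat.succ (brenLT ξ t')) (.cvar 0)) := by
        simp only [brenLT, brenLC, brenLE, brenLM_T]
      rw [h1]; exact BRootT.theta _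

theorem brootT_renM (ξ : ℕ → ℕ) {t t' : BTm} (h : BRootT t t') :
    BRootT (brenMT ξ t) (brenMT ξ t') := by
  cases h with
  | theta s =>
      have h1 : brenMT ξ (BTm.mabs (.cut (brenMT Nat.succ t') (.cvar 0)))
          = BTm.mabs (.cut (brenMT Nat.succ (brenMT ξ t')) (.cvar 0)) := by
        simp only [brenMT, brenMC, brenME, brenMM_T]; rfl
      rw [h1]; exact BRootT.theta _

theorem brootCv_renL (ξ : ℕ → ℕ) {c c' : BCm} (h : BRootCv c c') :
    BRootCv (brenLC ξ c) (brenLC ξ c') := by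
  cases h with
  | beta u t e =>
      have h2 : brenLE (upr ξ) (brenLE Nat.succ e) = brenLE Nat.succ (brenLE ξ e) := by
        rw [brenLL_E, brenLL_E]; rfl
      simp only [brenLC, brenLT, brenLE, h2]
      exact BRootCv.beta _ _ _
  | mu c e =>
      have h2 : (fun k => brenLE ξ (bsub0M e k)) = bsub0M (brenLE ξ e) := by
        funext k; cases k <;> rfl
      simp only [brenLC, brenLT]
      rw [brenL_bmsub_C, h2]
      exact BRootCv.mu _ _
  | mutildev v c hv =>
      have h2 : (fun k => bsub0L (brenLT ξ v) (upr ξ k)) = fun k => brenLT ξ (bsub0L v k) := by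
        funext k; cases k <;> rfl
      simp only [brenLC, brenLE]
      rw [brenL_blsub_C, ← h2, ← blsub_brenL_C (bsub0L (brenLT ξ v)) (upr ξ) c]
      exact BRootCv.mutildev _ _ (hv.renL ξ)

theorem brootCv_renM (ξ : ℕ → ℕ) {c c' : BCm} (h : BRootCv c c') :
    BRootCv (brenMC ξ c) (brenMC ξ c') := by
  cases h with
  | beta u t e =>
      have h2 : brenME ξ (brenLE Nat.succ e) = brenLE Nat.succ (brenME ξ e) :=
        (brenLM_E Nat.succ ξ e).symm
      simp only [brenMC, brenMT, brenME, h2]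
      exact BRootCv.beta _ _ _
  | mu c e =>
      have h2 : (fun k => bsub0M (brenME ξ e) (upr ξ k)) = fun k => brenME ξ (bsub0M e k) := by
        funext k; cases k <;> rfl
      simp only [brenMC, brenMT]
      rw [brenM_bmsub_C, ← h2, ← bmsub_brenM_C (bsub0M (brenME ξ e)) (upr ξ) c]
      exact BRootCv.mu _ _
  | mutildev v c hv =>
      have h2 : (fun k => brenMT ξ (bsub0L v k)) = bsub0L (brenMT ξ v) := by
        funext k; cases k <;> rfl
      simp only [brenMC, brenME]
      rw [brenM_blsub_C, h2]
      exact BRootCv.mutildev _ _ (hv.renM ξ)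

theorem brootCvlin_renL (ξ : ℕ → ℕ) {c c' : BCm} (h : BRootCvlin c c') :
    BRootCvlin (brenLC ξ c) (brenLC ξ c') := by
  cases h with
  | beta u t e =>
      have h2 : brenLE (upr ξ) (brenLE Nat.succ e) = brenLE Nat.succ (brenLE ξ e) := by
        rw [brenLL_E, brenLL_E]; rfl
      simp only [brenLC, brenLT, brenLE, h2]
      exact BRootCvlin.beta _ _ _
  | mu c e hlin =>
      have h2 : (fun k => brenLE ξ (bsub0M e k)) = bsub0M (brenLE ξ e) := by
        funext k; cases k <;> rfl
      simp only [brenLC, brenLT]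
      rw [brenL_bmsub_C, h2]
      refine BRootCvlin.mu _ _ ?_
      rcases hlin with ⟨a, rfl⟩ | hcnt
      · exact Or.inl ⟨a, rfl⟩
      · exact Or.inr (by rw [cntM_renL_C]; exact hcnt)
  | mutildev v c hv hlin =>
      have h2 : (fun k => bsub0L (brenLT ξ v) (upr ξ k)) = fun k => brenLT ξ (bsub0L v k) := by
        funext k; cases k <;> rfl
      simp only [brenLC, brenLE]
      rw [brenL_blsub_C, ← h2, ← blsub_brenL_C (bsub0L (brenLT ξ v)) (upr ξ) c]
      refine BRootCvlin.mutildev _ _ (hv.renL ξ) ?_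
      rcases hlin with ⟨x, rfl⟩ | hcnt
      · exact Or.inl ⟨ξ x, rfl⟩
      · exact Or.inr (by rw [cntL_renL_C 0 0 (upr ξ) (upr_iff0 ξ)]; exact hcnt)

theorem brootCvlin_renM (ξ : ℕ → ℕ) {c c' : BCm} (h : BRootCvlin c c') :
    BRootCvlin (brenMC ξ c) (brenMC ξ c') := by
  cases h with
  | beta u t e =>
      have h2 : brenME ξ (brenLE Nat.succ e) = brenLE Nat.succ (brenME ξ e) :=
        (brenLM_E Nat.succ ξ e).symm
      simp only [brenMC, brenMT, brenME, h2]
      exact BRootCvlin.beta _ _ _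
  | mu c e hlin =>
      have h2 : (fun k => bsub0M (brenME ξ e) (upr ξ k)) = fun k => brenME ξ (bsub0M e k) := by
        funext k; cases k <;> rfl
      simp only [brenMC, brenMT]
      rw [brenM_bmsub_C, ← h2, ← bmsub_brenM_C (bsub0M (brenME ξ e)) (upr ξ) c]
      refine BRootCvlin.mu _ _ ?_
      rcases hlin with ⟨a, rfl⟩ | hcnt
      · exact Or.inl ⟨ξ a, rfl⟩
      · exact Or.inr (by rw [cntM_renM_C 0 0 (upr ξ) (upr_iff0 ξ)]; exact hcnt)
  | mutildev v c hv hlin =>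
      have h2 : (fun k => brenMT ξ (bsub0L v k)) = bsub0L (brenMT ξ v) := by
        funext k; cases k <;> rfl
      simp only [brenMC, brenME]
      rw [brenM_blsub_C, h2]
      refine BRootCvlin.mutildev _ _ (hv.renM ξ) ?_
      rcases hlin with ⟨x, rfl⟩ | hcnt
      · exact Or.inl ⟨x, rfl⟩
      · exact Or.inr (by rw [cntL_renM_C]; exact hcnt)

/-! ### Stability of one-step reduction under renamings -/

section JRen

variable {R1 : BTm → BTm → Prop} {R2 : BCm → BCm → Prop}

mutual
theorem jrenL_T (hR1L : ∀ (ξ : ℕ → ℕ) {t t'}, R1 t t' → R1 (brenLT ξ t) (brenLT ξ t'))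
    (hR2L : ∀ (ξ : ℕ → ℕ) {c c'}, R2 c c' → R2 (brenLC ξ c) (brenLC ξ c'))
    (ξ : ℕ → ℕ) {t t' : BTm} (h : JT R1 R2 t t') :
    JT R1 R2 (brenLT ξ t) (brenLT ξ t') := by
  cases h with
  | root r => exact JT.root (hR1L ξ r)
  | absC h => exact JT.absC (jrenL_T hR1L hR2L (upr ξ) h)
  | mabsC h => exact JT.mabsC (jrenL_C hR1L hR2L ξ h)
theorem jrenL_C (hR1L : ∀ (ξ : ℕ → ℕ) {t t'}, R1 t t' → R1 (brenLT ξ t) (brenLT ξ t'))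
    (hR2L : ∀ (ξ : ℕ → ℕ) {c c'}, R2 c c' → R2 (brenLC ξ c) (brenLC ξ c'))
    (ξ : ℕ → ℕ) {c c' : BCm} (h : JC R1 R2 c c') :
    JC R1 R2 (brenLC ξ c) (brenLC ξ c') := by
  cases h with
  | root r => exact JC.root (hR2L ξ r)
  | cutL e h => exact JC.cutL _ (jrenL_T hR1L hR2L ξ h)
  | cutR t h => exact JC.cutR _ (jrenL_E hR1L hR2L ξ h)
theorem jrenL_E (hR1L : ∀ (ξ : ℕ → ℕ) {t t'}, R1 t t' → R1 (brenLT ξ t) (brenLT ξ t'))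
    (hR2L : ∀ (ξ : ℕ → ℕ) {c c'}, R2 c c' → R2 (brenLC ξ c) (brenLC ξ c'))
    (ξ : ℕ → ℕ) {e e' : BCt} (h : JE R1 R2 e e') :
    JE R1 R2 (brenLE ξ e) (brenLE ξ e') := by
  cases h with
  | consL e h => exact JE.consL _ (jrenL_T hR1L hR2L ξ h)
  | consR t h => exact JE.consR _ (jrenL_E hR1L hR2L ξ h)
  | tmuC h => exact JE.tmuC (jrenL_C hR1L hR2L (upr ξ) h)
end

mutual
theorem jrenM_T (hR1M : ∀ (ξ : ℕ → ℕ) {t t'}, R1 t t' → R1 (brenMT ξ t) (brenMT ξ t'))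
    (hR2M : ∀ (ξ : ℕ → ℕ) {c c'}, R2 c c' → R2 (brenMC ξ c) (brenMC ξ c'))
    (ξ : ℕ → ℕ) {t t' : BTm} (h : JT R1 R2 t t') :
    JT R1 R2 (brenMT ξ t) (brenMT ξ t') := by
  cases h with
  | root r => exact JT.root (hR1M ξ r)
  | absC h => exact JT.absC (jrenM_T hR1M hR2M ξ h)
  | mabsC h => exact JT.mabsC (jrenM_C hR1M hR2M (upr ξ) h)
theorem jrenM_C (hR1M : ∀ (ξ : ℕ → ℕ) {t t'}, R1 t t' → R1 (brenMT ξ t) (brenMT ξ t'))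
    (hR2M : ∀ (ξ : ℕ → ℕ) {c c'}, R2 c c' → R2 (brenMC ξ c) (brenMC ξ c'))
    (ξ : ℕ → ℕ) {c c' : BCm} (h : JC R1 R2 c c') :
    JC R1 R2 (brenMC ξ c) (brenMC ξ c') := by
  cases h with
  | root r => exact JC.root (hR2M ξ r)
  | cutL e h => exact JC.cutL _ (jrenM_T hR1M hR2M ξ h)
  | cutR t h => exact JC.cutR _ (jrenM_E hR1M hR2M ξ h)
theorem jrenM_E (hR1M : ∀ (ξ : ℕ → ℕ) {t t'}, R1 t t' → R1 (brenMT ξ t) (brenMT ξ t'))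
    (hR2M : ∀ (ξ : ℕ → ℕ) {c c'}, R2 c c' → R2 (brenMC ξ c) (brenMC ξ c'))
    (ξ : ℕ → ℕ) {e e' : BCt} (h : JE R1 R2 e e') :
    JE R1 R2 (brenME ξ e) (brenME ξ e') := by
  cases h with
  | consL e h => exact JE.consL _ (jrenM_T hR1M hR2M ξ h)
  | consR t h => exact JE.consR _ (jrenM_E hR1M hR2M ξ h)
  | tmuC h => exact JE.tmuC (jrenM_C hR1M hR2M ξ h)
end

end JRen

theorem BStepVT.renL (ξ : ℕ → ℕ) {t t'} (h : BStepVT t t') :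
    BStepVT (brenLT ξ t) (brenLT ξ t') :=
  jrenL_T (fun ξ _ _ => brootT_renL ξ) (fun ξ _ _ => brootCv_renL ξ) ξ h
theorem BStepVT.renM (ξ : ℕ → ℕ) {t t'} (h : BStepVT t t') :
    BStepVT (brenMT ξ t) (brenMT ξ t') :=
  jrenM_T (fun ξ _ _ => brootT_renM ξ) (fun ξ _ _ => brootCv_renM ξ) ξ h
theorem LBStepVT.renL (ξ : ℕ → ℕ) {t t'} (h : LBStepVT t t') :
    LBStepVT (brenLT ξ t) (brenLT ξ t') :=
  jrenL_T (fun ξ _ _ => brootT_renL ξ) (fun ξ _ _ => brootCvlin_renL ξ) ξ h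
theorem LBStepVT.renM (ξ : ℕ → ℕ) {t t'} (h : LBStepVT t t') :
    LBStepVT (brenMT ξ t) (brenMT ξ t') :=
  jrenM_T (fun ξ _ _ => brootT_renM ξ) (fun ξ _ _ => brootCvlin_renM ξ) ξ h

/-! ### Star congruence helpers -/

theorem star_absC {R1 R2} {t t' : BTm} (h : Star (JT R1 R2) t t') :
    Star (JT R1 R2) (.abs t) (.abs t') :=
  Relation.ReflTransGen.lift (r := JT R1 R2) (fun x => BTm.abs x) (fun _ _ => JT.absC) _ _ h
theorem star_mabsC {R1 R2} {c c' : BCm} (h : Star (JC R1 R2) c c') :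
    Star (JT R1 R2) (.mabs c) (.mabs c') :=
  Relation.ReflTransGen.lift (r := JC R1 R2) (fun x => BTm.mabs x) (fun _ _ => JT.mabsC) _ _ h
theorem star_cutL {R1 R2} {t t' : BTm} (e : BCt) (h : Star (JT R1 R2) t t') :
    Star (JC R1 R2) (.cut t e) (.cut t' e) :=
  Relation.ReflTransGen.lift (r := JT R1 R2) (fun x => BCm.cut x e) (fun _ _ => JC.cutL e) _ _ h
theorem star_cutR {R1 R2} (t : BTm) {e e' : BCt} (h : Star (JE R1 R2) e e') :
    Star (JC R1 R2) (.cut t e) (.cut t e') :=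
  Relation.ReflTransGen.lift (r := JE R1 R2) (fun x => BCm.cut t x) (fun _ _ => JC.cutR t) _ _ h
theorem star_tmuC {R1 R2} {c c' : BCm} (h : Star (JC R1 R2) c c') :
    Star (JE R1 R2) (.tmu c) (.tmu c') :=
  Relation.ReflTransGen.lift (r := JC R1 R2) (fun x => BCt.tmu x) (fun _ _ => JE.tmuC) _ _ h
theorem star_consL {R1 R2} {t t' : BTm} (e : BCt) (h : Star (JT R1 R2) t t') :
    Star (JE R1 R2) (.cons t e) (.cons t' e) :=
  Relation.ReflTransGen.lift (r := JT R1 R2) (fun x => BCt.cons x e) (fun _ _ => JE.consL e) _ _ h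
theorem star_consR {R1 R2} (t : BTm) {e e' : BCt} (h : Star (JE R1 R2) e e') :
    Star (JE R1 R2) (.cons t e) (.cons t e') :=
  Relation.ReflTransGen.lift (r := JE R1 R2) (fun x => BCt.cons t x) (fun _ _ => JE.consR t) _ _ h
/-! ### The application translation and context filling -/

/-- `(u v)† = Adag u† v†`. -/
def Adag (U V : BTm) : BTm :=
  .mabs (.cut (brenMT Nat.succ V)
    (.tmu (.cut (brenLT Nat.succ (brenMT Nat.succ U)) (.cons (.var 0) (.cvar 0)))))

theorem dag_app (u v : Tm) : dagT (.app u v) = Adag (dagT u) (dagT v) := by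
  simp [dagT, Adag]

theorem bmsub_brenMsucc (ρ : ℕ → BCt) (V : BTm) :
    bmsubT (bupsM ρ) (brenMT Nat.succ V) = brenMT Nat.succ (bmsubT ρ V) := by
  rw [bmsub_brenM_T]
  have h : (fun k => bupsM ρ (Nat.succ k)) = fun k => brenME Nat.succ (ρ k) := rfl
  rw [h, ← brenM_bmsub_T]

theorem blsub_brenMsucc (ρ : ℕ → BTm) (V : BTm) :
    blsubT (fun k => brenMT Nat.succ (ρ k)) (brenMT Nat.succ V)
      = brenMT Nat.succ (blsubT ρ V) := by
  rw [← brenM_blsub_T]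

theorem bmsub_A (ρ : ℕ → BCt) (U V : BTm) :
    bmsubT ρ (Adag U V) = Adag (bmsubT ρ U) (bmsubT ρ V) := by
  have h1 : bmsubT (fun k => brenLE Nat.succ (bupsM ρ k)) (brenLT Nat.succ (brenMT Nat.succ U))
      = brenLT Nat.succ (brenMT Nat.succ (bmsubT ρ U)) := by
    rw [← brenL_bmsub_T, bmsub_brenMsucc]
  have h2 : bmsubE (fun k => brenLE Nat.succ (bupsM ρ k)) (BCt.cvar 0) = BCt.cvar 0 := rfl
  simp only [Adag, bmsubT, bmsubC, bmsubE, h1, h2, bmsub_brenMsucc]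
  rfl

theorem blsub_A (ρ : ℕ → BTm) (U V : BTm) :
    blsubT ρ (Adag U V) = Adag (blsubT ρ U) (blsubT ρ V) := by
  have h1 : blsubT (bupsL fun k => brenMT Nat.succ (ρ k)) (brenLT Nat.succ (brenMT Nat.succ U))
      = brenLT Nat.succ (brenMT Nat.succ (blsubT ρ U)) := by
    rw [blsub_brenL_T]
    have h : (fun k => bupsL (fun k => brenMT Nat.succ (ρ k)) (Nat.succ k))
        = fun k => brenLT Nat.succ (brenMT Nat.succ (ρ k)) := rfl
    rw [h]
    have h' : (fun k => brenLT Nat.succ (brenMT Nat.succ (ρ k)))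
        = fun k => brenLT Nat.succ ((fun n => brenMT Nat.succ (ρ n)) k) := rfl
    rw [h', ← brenL_blsub_T, blsub_brenMsucc]
  simp only [Adag, blsubT, blsubC, blsubE, h1, blsub_brenMsucc]
  rfl

theorem starA_left_BV {U U' : BTm} (V : BTm) (h : Star BStepVT U U') :
    Star BStepVT (Adag U V) (Adag U' V) :=
  Relation.ReflTransGen.lift (r := BStepVT) (fun X => Adag X V)
    (fun _ _ hs => JT.mabsC (JC.cutR _ (JE.tmuC (JC.cutL _
      ((hs.renM Nat.succ).renL Nat.succ))))) _ _ h

theorem starA_right_BV (U : BTm) {V V' : BTm} (h : Star BStepVT V V') :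
    Star BStepVT (Adag U V) (Adag U V') :=
  Relation.ReflTransGen.lift (r := BStepVT) (fun X => Adag U X)
    (fun _ _ hs => JT.mabsC (JC.cutL _ (hs.renM Nat.succ))) _ _ h

theorem starA_left_LBV {U U' : BTm} (V : BTm) (h : Star LBStepVT U U') :
    Star LBStepVT (Adag U V) (Adag U' V) :=
  Relation.ReflTransGen.lift (r := LBStepVT) (fun X => Adag X V)
    (fun _ _ hs => JT.mabsC (JC.cutR _ (JE.tmuC (JC.cutL _
      ((hs.renM Nat.succ).renL Nat.succ))))) _ _ h

theorem starA_right_LBV (U : BTm) {V V' : BTm} (h : Star LBStepVT V V') :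
    Star LBStepVT (Adag U V) (Adag U V') :=
  Relation.ReflTransGen.lift (r := LBStepVT) (fun X => Adag U X)
    (fun _ _ hs => JT.mabsC (JC.cutL _ (hs.renM Nat.succ))) _ _ h

/-- The translation of a filled context, as a function of the filling term. -/
def BfillD : Ct → BTm → BCm
  | .cvar a, S => .cut S (.cvar a)
  | .push b u, S => .cut (Adag (dagT u) S) (.cvar b)
  | .cons h u, S => BfillD h (Adag S (dagT u))

theorem dag_fill (e : Ct) : ∀ t : Tm, dagC (fill e t) = BfillD e (dagT t) := by
  induction e with
  | cvar a => intro t; simp [fill, BfillD, dagC]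
  | push b u => intro t; simp [fill, BfillD, dagC, dag_app]
  | cons h u ih => intro t; simp [fill, BfillD, ih, dag_app]

/-- Contexts all of whose pushed-on terms are values. -/
inductive GoodE : Ct → Prop
  | cvar (a : ℕ) : GoodE (.cvar a)
  | push (b : ℕ) (t : Tm) : GoodE (.push b t)
  | cons {e : Ct} {v : Tm} : GoodE e → IsVal v → GoodE (.cons e v)

theorem GoodE.renL {e : Ct} (h : GoodE e) (ξ : ℕ → ℕ) : GoodE (renLE ξ e) := by
  induction h with
  | cvar a => exact GoodE.cvar a
  | push b t => exact GoodE.push b _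
  | cons hg hv ih => exact GoodE.cons ih (hv.renL ξ)

theorem GoodE.renM {e : Ct} (h : GoodE e) (ξ : ℕ → ℕ) : GoodE (renME ξ e) := by
  induction h with
  | cvar a => simp only [renME]; exact GoodE.cvar _
  | push b t => simp only [renME]; exact GoodE.push _ _
  | cons hg hv ih => exact GoodE.cons ih (hv.renM ξ)

theorem bmsub0_brenMsucc_T (E : BCt) (S : BTm) :
    bmsubT (bsub0M E) (brenMT Nat.succ S) = S := by
  rw [bmsub_brenM_T]
  have h : (fun k => bsub0M E (Nat.succ k)) = fun k => BCt.cvar k := by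
    funext k; rfl
  rw [h, bmsub_id_T]

theorem blsub0_brenLsucc_T (V : BTm) (S : BTm) :
    blsubT (bsub0L V) (brenLT Nat.succ S) = S := by
  rw [blsub_brenL_T]
  have h : (fun k => bsub0L V (Nat.succ k)) = fun k => BTm.var k := by
    funext k; rfl
  rw [h, blsub_id_T]

theorem blsub0_brenLsucc_E (V : BTm) (E : BCt) :
    blsubE (bsub0L V) (brenLE Nat.succ E) = E := by
  rw [blsub_brenL_E]
  have h : (fun k => bsub0L V (Nat.succ k)) = fun k => BTm.var k := by
    funext k; rfl
  rw [h, blsub_id_E]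

theorem bmsub0_A (E : BCt) (U S : BTm) :
    bmsubC (bsub0M E) (.cut (brenMT Nat.succ U)
      (.tmu (.cut (brenLT Nat.succ (brenMT Nat.succ S)) (.cons (.var 0) (.cvar 0)))))
    = .cut U (.tmu (.cut (brenLT Nat.succ S) (.cons (.var 0) (brenLE Nat.succ E)))) := by
  have h1 : bmsubT (fun k => brenLE Nat.succ (bsub0M E k))
      (brenLT Nat.succ (brenMT Nat.succ S)) = brenLT Nat.succ S := by
    rw [← brenL_bmsub_T, bmsub0_brenMsucc_T]
  have h2 : bmsubE (fun k => brenLE Nat.succ (bsub0M E k)) (BCt.cvar 0)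
      = brenLE Nat.succ E := rfl
  simp only [bmsubC, bmsubT, bmsubE, h1, h2, bmsub0_brenMsucc_T]
  rfl

theorem cntM0_A (U S : BTm) :
    bcntMC 0 (BCm.cut (brenMT Nat.succ U)
      (.tmu (.cut (brenLT Nat.succ (brenMT Nat.succ S)) (.cons (.var 0) (.cvar 0))))) = 1 := by
  simp only [bcntMC, bcntME, bcntMT, cntM_renL_T,
    cntM0_renM_T 0 Nat.succ (fun k => Nat.succ_ne_zero k) U,
    cntM0_renM_T 0 Nat.succ (fun k => Nat.succ_ne_zero k) S]
  norm_num

theorem cntL0_inner (S : BTm) (E : BCt) :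
    bcntLC 0 (BCm.cut (brenLT Nat.succ S) (.cons (.var 0) (brenLE Nat.succ E))) = 1 := by
  simp only [bcntLC, bcntLE, bcntLT,
    cntL0_renL_T 0 Nat.succ (fun k => Nat.succ_ne_zero k) S,
    cntL0_renL_E 0 Nat.succ (fun k => Nat.succ_ne_zero k) E, if_pos rfl]
  norm_num

/-- Key lemma: linearly unfolding the translation of a filled context. -/
theorem fill_dag_star {e : Ct} (he : GoodE e) : ∀ S : BTm,
    Star LBStepVC (BfillD e S) (.cut S (dagE e)) := by
  induction he with
  | cvar a => intro S; exact Relation.ReflTransGen.refl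
  | push b t =>
      intro S
      refine Relation.ReflTransGen.single ?_
      have hstep : LBStepVC (.cut (Adag (dagT t) S) (.cvar b))
          (bmsubC (bsub0M (.cvar b)) (.cut (brenMT Nat.succ S)
            (.tmu (.cut (brenLT Nat.succ (brenMT Nat.succ (dagT t)))
              (.cons (.var 0) (.cvar 0)))))) :=
        JC.root (BRootCvlin.mu _ _ (Or.inl ⟨b, rfl⟩))
      have heq : bmsubC (bsub0M (BCt.cvar b)) (.cut (brenMT Nat.succ S)
            (.tmu (.cut (brenLT Nat.succ (brenMT Nat.succ (dagT t)))
              (.cons (.var 0) (.cvar 0)))))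
          = .cut S (dagE (.push b t)) := by
        rw [bmsub0_A]; simp [dagE]; rfl
      rw [heq] at hstep
      exact hstep
  | @cons h u hg hv ih =>
      intro S
      refine Relation.ReflTransGen.trans (ih (Adag S (dagT u))) ?_
      have hstep1 : LBStepVC (.cut (Adag S (dagT u)) (dagE h))
          (bmsubC (bsub0M (dagE h)) (.cut (brenMT Nat.succ (dagT u))
            (.tmu (.cut (brenLT Nat.succ (brenMT Nat.succ S))
              (.cons (.var 0) (.cvar 0)))))) :=
        JC.root (BRootCvlin.mu _ _ (Or.inr (cntM0_A (dagT u) S)))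
      rw [bmsub0_A] at hstep1
      have hstep2 : LBStepVC
          (.cut (dagT u) (.tmu (.cut (brenLT Nat.succ S)
            (.cons (.var 0) (brenLE Nat.succ (dagE h))))))
          (blsubC (bsub0L (dagT u)) (.cut (brenLT Nat.succ S)
            (.cons (.var 0) (brenLE Nat.succ (dagE h))))) :=
        JC.root (BRootCvlin.mutildev _ _ (dag_val hv) (Or.inr (cntL0_inner S (dagE h))))
      have heq2 : blsubC (bsub0L (dagT u)) (.cut (brenLT Nat.succ S)
            (.cons (.var 0) (brenLE Nat.succ (dagE h))))
          = .cut S (dagE (.cons h u)) := by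
        simp only [blsubC, blsubT, blsubE, blsub0_brenLsucc_T, blsub0_brenLsucc_E, dagE]
        rfl
      rw [heq2] at hstep2
      exact Relation.ReflTransGen.trans (Relation.ReflTransGen.single hstep1)
        (Relation.ReflTransGen.single hstep2)

/-! ### The structural-substitution simulation lemma -/

mutual
theorem msub_dag_T (σ : ℕ → Ct) (hσ : ∀ k, GoodE (σ k)) (t : Tm) :
    Star LBStepVT (dagT (msubT σ t)) (bmsubT (fun k => dagE (σ k)) (dagT t)) := by
  cases t with
  | var x => exact Relation.ReflTransGen.refl
  | abs t =>
      have ih := msub_dag_T (fun k => renLE Nat.succ (σ k)) (fun k => (hσ k).renL _) t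
      rw [show (fun k => dagE (renLE Nat.succ (σ k)))
          = (fun k => brenLE Nat.succ (dagE (σ k))) from funext fun k => dag_renL_E _ _] at ih
      simp only [msubT, dagT, bmsubT]
      exact star_absC ih
  | mabs c =>
      have ih := msub_dag_C (upsM σ)
        (fun k => by cases k with
          | zero => exact GoodE.cvar 0
          | succ k => exact (hσ k).renM _) c
      rw [show (fun k => dagE (upsM σ k)) = bupsM (fun k => dagE (σ k)) from funext fun k => by
        cases k with
        | zero => rfl
        | succ k => exact dag_renM_E _ _] at ih
      simp only [msubT, dagT, bmsubT]
      exact star_mabsC ih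
  | app a b =>
      have iha := msub_dag_T σ hσ a
      have ihb := msub_dag_T σ hσ b
      simp only [msubT, dag_app, bmsub_A]
      exact Relation.ReflTransGen.trans (starA_left_LBV _ iha) (starA_right_LBV _ ihb)
theorem msub_dag_C (σ : ℕ → Ct) (hσ : ∀ k, GoodE (σ k)) (c : Cm) :
    Star LBStepVC (dagC (msubC σ c)) (bmsubC (fun k => dagE (σ k)) (dagC c)) := by
  cases c with
  | cmd a t =>
      have ih := msub_dag_T σ hσ t
      have h1 : dagC (msubC σ (.cmd a t)) = BfillD (σ a) (dagT (msubT σ t)) := by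
        simp only [msubC, dag_fill]
      have h2 : bmsubC (fun k => dagE (σ k)) (dagC (.cmd a t))
          = .cut (bmsubT (fun k => dagE (σ k)) (dagT t)) (dagE (σ a)) := by
        simp only [dagC, bmsubC, bmsubE]
      rw [h1, h2]
      exact Relation.ReflTransGen.trans (fill_dag_star (hσ a) _) (star_cutL _ ih)
end
/-! ### The translation and λ-substitution -/

mutual
theorem dag_lsub_T (σ : ℕ → Tm) (t : Tm) :
    dagT (lsubT σ t) = blsubT (fun k => dagT (σ k)) (dagT t) := by
  cases t with
  | var x => rfl
  | abs t =>
      simp only [lsubT, dagT, blsubT, dag_lsub_T (upsL σ) t]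
      rw [show (fun k => dagT (upsL σ k)) = bupsL (fun k => dagT (σ k)) from funext fun k => by
        cases k with
        | zero => rfl
        | succ k => exact dag_renL_T _ _]
  | app a b => simp only [lsubT, dag_app, blsub_A, dag_lsub_T σ a, dag_lsub_T σ b]
  | mabs c =>
      simp only [lsubT, dagT, blsubT, dag_lsub_C _ c]
      rw [show (fun k => dagT (renMT Nat.succ (σ k)))
          = (fun k => brenMT Nat.succ (dagT (σ k))) from funext fun k => dag_renM_T _ _]
theorem dag_lsub_C (σ : ℕ → Tm) (c : Cm) :
    dagC (lsubC σ c) = blsubC (fun k => dagT (σ k)) (dagC c) := by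
  cases c with
  | cmd a t => simp only [lsubC, dagC, blsubC, blsubE, dag_lsub_T σ t]
end

/-! ### Simulation of the root rules -/

theorem sim_betav {u t : Tm} (hval : IsVal t) :
    ∃ w, Star BStepVT (dagT (.app (.abs u) t)) w ∧
         Star LBStepVT (dagT (lsubT (sub0L t) u)) w := by
  have hV : BIsVal (dagT t) := dag_val hval
  have s1 : BStepVT (dagT (.app (.abs u) t))
      (.mabs (.cut (.abs (brenMT Nat.succ (dagT u)))
        (.cons (brenMT Nat.succ (dagT t)) (.cvar 0)))) := by
    have h0 : dagT (.app (.abs u) t) = .mabs (.cut (brenMT Nat.succ (dagT t))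
        (.tmu (.cut (brenLT Nat.succ (brenMT Nat.succ (.abs (dagT u))))
          (.cons (.var 0) (.cvar 0))))) := by
      simp [dag_app, Adag, dagT]
    rw [h0]
    have hstep := JC.root (R1 := BRootT) (BRootCv.mutildev (brenMT Nat.succ (dagT t))
      (.cut (brenLT Nat.succ (brenMT Nat.succ (.abs (dagT u)))) (.cons (.var 0) (.cvar 0)))
      (hV.renM _))
    have heq : blsubC (bsub0L (brenMT Nat.succ (dagT t)))
        (.cut (brenLT Nat.succ (brenMT Nat.succ (.abs (dagT u)))) (.cons (.var 0) (.cvar 0)))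
        = .cut (.abs (brenMT Nat.succ (dagT u)))
            (.cons (brenMT Nat.succ (dagT t)) (.cvar 0)) := by
      have h1 := blsub0_brenLsucc_T (brenMT Nat.succ (dagT t)) (brenMT Nat.succ (.abs (dagT u)))
      simp only [blsubC, blsubE, h1]
      rfl
    exact JT.mabsC (heq ▸ hstep)
  have s2 : BStepVT
      (.mabs (.cut (.abs (brenMT Nat.succ (dagT u)))
        (.cons (brenMT Nat.succ (dagT t)) (.cvar 0))))
      (.mabs (.cut (brenMT Nat.succ (dagT t))
        (.tmu (.cut (brenMT Nat.succ (dagT u)) (.cvar 0))))) :=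
    JT.mabsC (JC.root (BRootCv.beta (brenMT Nat.succ (dagT u))
      (brenMT Nat.succ (dagT t)) (.cvar 0)))
  have s3 : BStepVT
      (.mabs (.cut (brenMT Nat.succ (dagT t))
        (.tmu (.cut (brenMT Nat.succ (dagT u)) (.cvar 0)))))
      (.mabs (.cut (brenMT Nat.succ (blsubT (bsub0L (dagT t)) (dagT u))) (.cvar 0))) := by
    have hstep := JC.root (R1 := BRootT) (BRootCv.mutildev (brenMT Nat.succ (dagT t))
      (.cut (brenMT Nat.succ (dagT u)) (.cvar 0)) (hV.renM _))
    have heq : blsubC (bsub0L (brenMT Nat.succ (dagT t)))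
        (.cut (brenMT Nat.succ (dagT u)) (.cvar 0))
        = .cut (brenMT Nat.succ (blsubT (bsub0L (dagT t)) (dagT u))) (.cvar 0) := by
      have hfun : bsub0L (brenMT Nat.succ (dagT t))
          = fun k => brenMT Nat.succ (bsub0L (dagT t) k) := by
        funext k; cases k <;> rfl
      simp only [blsubC, blsubE]
      rw [hfun, blsub_brenMsucc]
    exact JT.mabsC (heq ▸ hstep)
  have s4 : BStepVT
      (.mabs (.cut (brenMT Nat.succ (blsubT (bsub0L (dagT t)) (dagT u))) (.cvar 0)))
      (blsubT (bsub0L (dagT t)) (dagT u)) := JT.root (BRootT.theta _)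
  refine ⟨blsubT (bsub0L (dagT t)) (dagT u), ?_, ?_⟩
  · exact .head s1 (.head s2 (.head s3 (.single s4)))
  · have heq : dagT (lsubT (sub0L t) u) = blsubT (bsub0L (dagT t)) (dagT u) := by
      rw [dag_lsub_T]
      congr 1
      funext k; cases k <;> rfl
    rw [heq]

theorem sim_muv {c : Cm} {t : Tm} (hval : IsVal t) :
    ∃ w, Star BStepVT (dagT (.app (.mabs c) t)) w ∧
      Star LBStepVT (dagT (.mabs (msubC (sub1M 0 (.cons (.cvar 0) (renMT Nat.succ t))) c))) w := by
  have hΦ : (fun k => dagE (sub1M 0 (.cons (.cvar 0) (renMT Nat.succ t)) k))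
      = fun k => (bsub0M (.cons (brenMT Nat.succ (dagT t)) (.cvar 0))) (upr Nat.succ k) := by
    funext k
    cases k with
    | zero => simp [sub1M, dagE, dag_renM_T, upr, bsub0M]
    | succ k => simp [sub1M, upr, bsub0M, dagE]
  have good : ∀ k, GoodE (sub1M 0 (.cons (.cvar 0) (renMT Nat.succ t)) k) := by
    intro k
    cases k with
    | zero => simpa [sub1M] using GoodE.cons (GoodE.cvar 0) (hval.renM Nat.succ)
    | succ k => simpa [sub1M] using GoodE.cvar (k+1)
  refine ⟨.mabs (bmsubC (fun k => dagE (sub1M 0 (.cons (.cvar 0) (renMT Nat.succ t)) k))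
    (dagC c)), ?_, ?_⟩
  · have s1 : BStepVT (dagT (.app (.mabs c) t))
        (.mabs (.cut (.mabs (brenMC (upr Nat.succ) (dagC c)))
          (.cons (brenMT Nat.succ (dagT t)) (.cvar 0)))) := by
      have h0 : dagT (.app (.mabs c) t) = .mabs (.cut (brenMT Nat.succ (dagT t))
          (.tmu (.cut (brenLT Nat.succ (brenMT Nat.succ (.mabs (dagC c))))
            (.cons (.var 0) (.cvar 0))))) := by
        simp [dag_app, Adag, dagT]
      rw [h0]
      have hstep := JC.root (R1 := BRootT) (BRootCv.mutildev (brenMT Nat.succ (dagT t))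
        (.cut (brenLT Nat.succ (brenMT Nat.succ (.mabs (dagC c)))) (.cons (.var 0) (.cvar 0)))
        ((dag_val hval).renM _))
      have heq : blsubC (bsub0L (brenMT Nat.succ (dagT t)))
          (.cut (brenLT Nat.succ (brenMT Nat.succ (.mabs (dagC c)))) (.cons (.var 0) (.cvar 0)))
          = .cut (.mabs (brenMC (upr Nat.succ) (dagC c)))
            (.cons (brenMT Nat.succ (dagT t)) (.cvar 0)) := by
        have h1 := blsub0_brenLsucc_T (brenMT Nat.succ (dagT t))
          (brenMT Nat.succ (.mabs (dagC c)))
        simp only [blsubC, blsubE, h1]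
        rfl
      exact JT.mabsC (heq ▸ hstep)
    have s2 : BStepVT
        (.mabs (.cut (.mabs (brenMC (upr Nat.succ) (dagC c)))
          (.cons (brenMT Nat.succ (dagT t)) (.cvar 0))))
        (.mabs (bmsubC (fun k => dagE (sub1M 0 (.cons (.cvar 0) (renMT Nat.succ t)) k))
          (dagC c))) := by
      have hstep := JC.root (R1 := BRootT) (BRootCv.mu (brenMC (upr Nat.succ) (dagC c))
        (.cons (brenMT Nat.succ (dagT t)) (.cvar 0)))
      have heq : bmsubC (bsub0M (.cons (brenMT Nat.succ (dagT t)) (.cvar 0)))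
          (brenMC (upr Nat.succ) (dagC c))
          = bmsubC (fun k => dagE (sub1M 0 (.cons (.cvar 0) (renMT Nat.succ t)) k)) (dagC c) := by
        rw [bmsub_brenM_C, ← hΦ]
      exact JT.mabsC (heq ▸ hstep)
    exact .head s1 (.single s2)
  · simpa [dagT] using star_mabsC (msub_dag_C _ good c)

theorem sim_mu' (t : Tm) (c : Cm) :
    ∃ w, Star BStepVT (dagT (.app t (.mabs c))) w ∧
      Star LBStepVT (dagT (.mabs (msubC (sub1M 0 (.push 0 (renMT Nat.succ t))) c))) w := by
  have hΦ : (fun k => dagE (sub1M 0 (.push 0 (renMT Nat.succ t)) k))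
      = fun k => (bsub0M (.tmu (.cut (brenLT Nat.succ (brenMT Nat.succ (dagT t)))
          (.cons (.var 0) (.cvar 0))))) (upr Nat.succ k) := by
    funext k
    cases k with
    | zero => simp [sub1M, dagE, dag_renM_T, upr, bsub0M]
    | succ k => simp [sub1M, upr, bsub0M, dagE]
  have good : ∀ k, GoodE (sub1M 0 (.push 0 (renMT Nat.succ t)) k) := by
    intro k
    cases k with
    | zero => simpa [sub1M] using GoodE.push 0 (renMT Nat.succ t)
    | succ k => simpa [sub1M] using GoodE.cvar (k+1)
  refine ⟨.mabs (bmsubC (fun k => dagE (sub1M 0 (.push 0 (renMT Nat.succ t)) k)) (dagC c)),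
    ?_, ?_⟩
  · have h0 : dagT (.app t (.mabs c)) = .mabs (.cut (.mabs (brenMC (upr Nat.succ) (dagC c)))
        (.tmu (.cut (brenLT Nat.succ (brenMT Nat.succ (dagT t))) (.cons (.var 0) (.cvar 0))))) := by
      simp [dag_app, Adag, dagT, brenMT]
    rw [h0]
    have hstep := JC.root (R1 := BRootT) (BRootCv.mu (brenMC (upr Nat.succ) (dagC c))
      (.tmu (.cut (brenLT Nat.succ (brenMT Nat.succ (dagT t))) (.cons (.var 0) (.cvar 0)))))
    have heq : bmsubC (bsub0M (.tmu (.cut (brenLT Nat.succ (brenMT Nat.succ (dagT t)))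
          (.cons (.var 0) (.cvar 0))))) (brenMC (upr Nat.succ) (dagC c))
        = bmsubC (fun k => dagE (sub1M 0 (.push 0 (renMT Nat.succ t)) k)) (dagC c) := by
      rw [bmsub_brenM_C, ← hΦ]
    exact .single (JT.mabsC (heq ▸ hstep))
  · simpa [dagT] using star_mabsC (msub_dag_C _ good c)

theorem sim_theta (t : Tm) :
    ∃ w, Star BStepVT (dagT (.mabs (.cmd 0 (renMT Nat.succ t)))) w ∧
      Star LBStepVT (dagT t) w := by
  refine ⟨dagT t, ?_, Relation.ReflTransGen.refl⟩
  have h0 : dagT (.mabs (.cmd 0 (renMT Nat.succ t)))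
      = .mabs (.cut (brenMT Nat.succ (dagT t)) (.cvar 0)) := by
    simp [dagT, dagC, dag_renM_T]
  rw [h0]
  exact .single (JT.root (BRootT.theta _))

theorem sim_rho (b : ℕ) (c : Cm) :
    ∃ w, Star BStepVC (dagC (.cmd b (.mabs c))) w ∧
      Star LBStepVC (dagC (msubC (sub0M (.cvar b)) c)) w := by
  have hΦ : (fun k => dagE (sub0M (.cvar b) k)) = bsub0M (.cvar b) := by
    funext k; cases k <;> rfl
  refine ⟨bmsubC (bsub0M (.cvar b)) (dagC c), ?_, ?_⟩
  · have h0 : dagC (.cmd b (.mabs c)) = .cut (.mabs (dagC c)) (.cvar b) := by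
      simp [dagC, dagT]
    rw [h0]
    exact .single (JC.root (BRootCv.mu _ _))
  · have good : ∀ k, GoodE (sub0M (.cvar b) k) := by
      intro k
      cases k with
      | zero => exact GoodE.cvar b
      | succ k => exact GoodE.cvar k
    have := msub_dag_C (sub0M (.cvar b)) good c
    rw [hΦ] at this
    exact this

/-! ### Congruence cases and the main theorem -/

theorem sim_rootT {t w : Tm} (h : RootTv t w) :
    ∃ u, Star BStepVT (dagT t) u ∧ Star LBStepVT (dagT w) u := by
  cases h with
  | betav u t hv => exact sim_betav hv
  | muv c t hv => exact sim_muv hv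
  | mu' t c => exact sim_mu' t c
  | theta s => exact sim_theta w

theorem sim_rootC {c d : Cm} (h : RootC c d) :
    ∃ u, Star BStepVC (dagC c) u ∧ Star LBStepVC (dagC d) u := by
  cases h with
  | rho b c => exact sim_rho b c

theorem sim_abs {t t' : Tm}
    (ih : ∃ u, Star BStepVT (dagT t) u ∧ Star LBStepVT (dagT t') u) :
    ∃ u, Star BStepVT (dagT (.abs t)) u ∧ Star LBStepVT (dagT (.abs t')) u := by
  obtain ⟨u, h1, h2⟩ := ih
  exact ⟨.abs u, by simpa [dagT] using star_absC h1, by simpa [dagT] using star_absC h2⟩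

theorem sim_appL {t t' : Tm} (v : Tm)
    (ih : ∃ u, Star BStepVT (dagT t) u ∧ Star LBStepVT (dagT t') u) :
    ∃ u, Star BStepVT (dagT (.app t v)) u ∧ Star LBStepVT (dagT (.app t' v)) u := by
  obtain ⟨u, h1, h2⟩ := ih
  exact ⟨Adag u (dagT v), by rw [dag_app]; exact starA_left_BV _ h1,
    by rw [dag_app]; exact starA_left_LBV _ h2⟩

theorem sim_appR (t : Tm) {v v' : Tm}
    (ih : ∃ u, Star BStepVT (dagT v) u ∧ Star LBStepVT (dagT v') u) :
    ∃ u, Star BStepVT (dagT (.app t v)) u ∧ Star LBStepVT (dagT (.app t v')) u := by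
  obtain ⟨u, h1, h2⟩ := ih
  exact ⟨Adag (dagT t) u, by rw [dag_app]; exact starA_right_BV _ h1,
    by rw [dag_app]; exact starA_right_LBV _ h2⟩

theorem sim_mabs {c c' : Cm}
    (ih : ∃ u, Star BStepVC (dagC c) u ∧ Star LBStepVC (dagC c') u) :
    ∃ u, Star BStepVT (dagT (.mabs c)) u ∧ Star LBStepVT (dagT (.mabs c')) u := by
  obtain ⟨u, h1, h2⟩ := ih
  exact ⟨.mabs u, by simpa [dagT] using star_mabsC h1, by simpa [dagT] using star_mabsC h2⟩

theorem sim_cmd (a : ℕ) {t t' : Tm}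
    (ih : ∃ u, Star BStepVT (dagT t) u ∧ Star LBStepVT (dagT t') u) :
    ∃ u, Star BStepVC (dagC (.cmd a t)) u ∧ Star LBStepVC (dagC (.cmd a t')) u := by
  obtain ⟨u, h1, h2⟩ := ih
  exact ⟨.cut u (.cvar a), by simpa [dagC] using star_cutL _ h1,
    by simpa [dagC] using star_cutL _ h2⟩
/-- call-by-value simulation of λμ by λ̄μμ̃.  If `t` reduces to
`w` by one call-by-value λμ-step, then there is `u` with `t† →v* u` and
`w† →lin-v* u`; and likewise for commands. -/
theorem cbv_lm_lmm_simulation :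
    (∀ t w : Tm, StepVT t w →
      ∃ u : BTm, Star BStepVT (dagT t) u ∧ Star LBStepVT (dagT w) u) ∧
    (∀ c d : Cm, StepVC c d →
      ∃ u : BCm, Star BStepVC (dagC c) u ∧ Star LBStepVC (dagC d) u) := by
  constructor
  · intro t w h
    refine KT.rec
      (motive_1 := fun t w _ => ∃ u, Star BStepVT (dagT t) u ∧ Star LBStepVT (dagT w) u)
      (motive_2 := fun c d _ => ∃ u, Star BStepVC (dagC c) u ∧ Star LBStepVC (dagC d) u)
      ?_ ?_ ?_ ?_ ?_ ?_ ?_ h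
    · intro t t' r; exact sim_rootT r
    · intro t t' hs ih; exact sim_abs ih
    · intro t t' u hs ih; exact sim_appL u ih
    · intro t u u' hs ih; exact sim_appR t ih
    · intro c c' hs ih; exact sim_mabs ih
    · intro c c' r; exact sim_rootC r
    · intro a t t' hs ih; exact sim_cmd a ih
  · intro c d h
    refine KC.rec
      (motive_1 := fun t w _ => ∃ u, Star BStepVT (dagT t) u ∧ Star LBStepVT (dagT w) u)
      (motive_2 := fun c d _ => ∃ u, Star BStepVC (dagC c) u ∧ Star LBStepVC (dagC d) u)
      ?_ ?_ ?_ ?_ ?_ ?_ ?_ h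
    · intro t t' r; exact sim_rootT r
    · intro t t' hs ih; exact sim_abs ih
    · intro t t' u hs ih; exact sim_appL u ih
    · intro t u u' hs ih; exact sim_appR t ih
    · intro c c' hs ih; exact sim_mabs ih
    · intro c c' r; exact sim_rootC r
    · intro a t t' hs ih; exact sim_cmd a ih

end CHSim
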